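/- arXiv:1002.1889 — 3 statements merged into one kernel-verified Lean document; each statement's English description precedes it below -/
import Mathlib

section
/- Let (Ω, 𝓕, P) be a probability space and (f_n)_{n∈ℕ} a sequence of nonnegative a.e.-finite measurable functions. Suppose that every sequence (h_n) of forward convex combinations of (f_n) that converges P-a.e. to a measurable function g : Ω → [0,∞] satisfies g < ∞ P-a.e. Then the convex hull of {f_n : n ∈ ℕ} is bounded in probability. -/
open MeasureTheory Filter Set

/-- `h` is a sequence of forward convex combinations of `f`: for every `n`,
`h n` lies in the convex hull of `{f k : k ≥ n}`. -/
def FwdConvexCombos {Ω : Type*} (f h : ℕ → Ω → ℝ) : Prop :=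
  ∀ n, h n ∈ convexHull ℝ {g : Ω → ℝ | ∃ k, n ≤ k ∧ g = f k}

/-- A set `B` of (nonnegative) functions is bounded in probability with respect to `P`:
`sup_{b ∈ B} P(b > ℓ) → 0` as `ℓ → ∞`. -/
def BddInProbability {Ω : Type*} [MeasurableSpace Ω] (P : MeasureTheory.Measure Ω)
    (B : Set (Ω → ℝ)) : Prop :=
  Tendsto (fun ℓ : ℝ => ⨆ b ∈ B, P {ω | ℓ < b ω}) atTop (nhds 0)

section Helpers

lemma exp_convex_bound {t h : ℝ} (ht0 : 0 ≤ t) (ht1 : t ≤ 1) :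
    Real.exp (-((1-t)*h)) ≤ t + (1-t)*Real.exp (-h) := by
  have := convexOn_exp.2 (mem_univ (-h)) (mem_univ (0:ℝ)) (sub_nonneg.2 ht1) ht0 (by ring)
  simp only [smul_eq_mul, mul_zero, add_zero, Real.exp_zero, mul_one] at this
  calc Real.exp (-((1-t)*h)) = Real.exp ((1-t) * -h) := by ring_nf
    _ ≤ (1-t) * Real.exp (-h) + t := this
    _ = t + (1-t)*Real.exp (-h) := by ring

lemma mix_bound_off {t h b : ℝ} (ht0 : 0 ≤ t) (ht1 : t ≤ 1) (hb : 0 ≤ b) :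
    Real.exp (-((1-t)*h + t*b)) ≤ Real.exp (-h) + t := by
  have h1 : Real.exp (-((1-t)*h + t*b)) ≤ Real.exp (-((1-t)*h)) := by
    apply Real.exp_le_exp.2; nlinarith
  have h2 := exp_convex_bound (h := h) ht0 ht1
  have h3 : (1-t) * Real.exp (-h) ≤ Real.exp (-h) := by
    nlinarith [Real.exp_pos (-h)]
  linarith

lemma mix_bound_on {t h b ℓ : ℝ} (ht0 : 0 ≤ t) (ht1 : t ≤ 1) (hh : 0 ≤ h)
    (hb : ℓ ≤ b) (hl : 0 ≤ ℓ) :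
    Real.exp (-((1-t)*h + t*b)) ≤
      Real.exp (-h) + t - (1 - Real.exp (-(t*ℓ))) * Real.exp (-h) := by
  have e1 : Real.exp (-((1-t)*h + t*b)) = Real.exp (-((1-t)*h)) * Real.exp (-(t*b)) := by
    rw [← Real.exp_add]; ring_nf
  have e2 : Real.exp (-(t*b)) ≤ Real.exp (-(t*ℓ)) := by
    apply Real.exp_le_exp.2; nlinarith
  have e3 : Real.exp (-h) ≤ Real.exp (-((1-t)*h)) := by
    apply Real.exp_le_exp.2; nlinarith
  have e4 := exp_convex_bound (h := h) ht0 ht1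
  have p1 := Real.exp_pos (-((1-t)*h))
  have p2 := Real.exp_pos (-(t*b))
  have p3 := Real.exp_pos (-h)
  have p4 : Real.exp (-(t*ℓ)) ≤ 1 := Real.exp_le_one_iff.2 (by nlinarith)
  calc Real.exp (-((1-t)*h + t*b)) = Real.exp (-((1-t)*h)) * Real.exp (-(t*b)) := e1
    _ ≤ Real.exp (-((1-t)*h)) * Real.exp (-(t*ℓ)) := by nlinarith
    _ = Real.exp (-((1-t)*h)) - Real.exp (-((1-t)*h)) * (1 - Real.exp (-(t*ℓ))) := by ring
    _ ≤ (t + (1-t)*Real.exp (-h)) - Real.exp (-h) * (1 - Real.exp (-(t*ℓ))) := by nlinarith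
    _ ≤ Real.exp (-h) + t - (1 - Real.exp (-(t*ℓ))) * Real.exp (-h) := by nlinarith

lemma mid_core {a b : ℝ} (ha0 : 0 < a) (ha1 : a ≤ 1) (hb0 : 0 < b) (hb1 : b ≤ 1) :
    (a - b)^2 ≤ 8 * ((a+b)/2 - Real.sqrt (a*b)) := by
  have hu : Real.sqrt a ^ 2 = a := Real.sq_sqrt ha0.le
  have hv : Real.sqrt b ^ 2 = b := Real.sq_sqrt hb0.le
  have hm : Real.sqrt (a*b) = Real.sqrt a * Real.sqrt b := Real.sqrt_mul ha0.le b
  have hu1 : Real.sqrt a ≤ 1 := by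
    rw [show (1:ℝ) = Real.sqrt 1 by simp]; exact Real.sqrt_le_sqrt ha1
  have hv1 : Real.sqrt b ≤ 1 := by
    rw [show (1:ℝ) = Real.sqrt 1 by simp]; exact Real.sqrt_le_sqrt hb1
  have hu0 : 0 ≤ Real.sqrt a := Real.sqrt_nonneg a
  have hv0 : 0 ≤ Real.sqrt b := Real.sqrt_nonneg b
  rw [hm]
  nlinarith [sq_nonneg (Real.sqrt a - Real.sqrt b), sq_nonneg (Real.sqrt a + Real.sqrt b),
    sq_nonneg ((Real.sqrt a - Real.sqrt b) * (Real.sqrt a + Real.sqrt b))]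

lemma mid_bound {x y : ℝ} (hx : 0 ≤ x) (hy : 0 ≤ y) :
    (Real.exp (-x) - Real.exp (-y))^2 ≤
      8 * ((Real.exp (-x) + Real.exp (-y))/2 - Real.exp (-((x+y)/2))) := by
  have he : Real.exp (-((x+y)/2)) = Real.sqrt (Real.exp (-x) * Real.exp (-y)) := by
    rw [← Real.exp_add, ← Real.exp_half]; ring_nf
  rw [he]
  exact mid_core (Real.exp_pos _) (Real.exp_le_one_iff.2 (by linarith)) (Real.exp_pos _)
    (Real.exp_le_one_iff.2 (by linarith))

variable {Ω : Type*} [MeasurableSpace Ω]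

lemma tHull_anti (f : ℕ → Ω → ℝ) {n m : ℕ} (hnm : n ≤ m) :
    convexHull ℝ {g : Ω → ℝ | ∃ k, m ≤ k ∧ g = f k} ⊆
      convexHull ℝ {g : Ω → ℝ | ∃ k, n ≤ k ∧ g = f k} :=
  convexHull_mono (fun g ⟨k, hk, hg⟩ => ⟨k, hnm.trans hk, hg⟩)

lemma tHull_meas (f : ℕ → Ω → ℝ) (hfmeas : ∀ n, Measurable (f n)) {n : ℕ} {b : Ω → ℝ}
    (hb : b ∈ convexHull ℝ {g : Ω → ℝ | ∃ k, n ≤ k ∧ g = f k}) : Measurable b := by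
  have : convexHull ℝ {g : Ω → ℝ | ∃ k, n ≤ k ∧ g = f k} ⊆ {g : Ω → ℝ | Measurable g} := by
    apply convexHull_min
    · rintro g ⟨k, _, rfl⟩; exact hfmeas k
    · intro x hx y hy a b ha hb hab
      exact (hx.const_smul a).add (hy.const_smul b)
  exact this hb

lemma tHull_nonneg {P : Measure Ω} (f : ℕ → Ω → ℝ) (hfnn : ∀ n, 0 ≤ᵐ[P] f n) {n : ℕ} {b : Ω → ℝ}
    (hb : b ∈ convexHull ℝ {g : Ω → ℝ | ∃ k, n ≤ k ∧ g = f k}) : 0 ≤ᵐ[P] b := by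
  have : convexHull ℝ {g : Ω → ℝ | ∃ k, n ≤ k ∧ g = f k} ⊆ {g : Ω → ℝ | 0 ≤ᵐ[P] g} := by
    apply convexHull_min
    · rintro g ⟨k, _, rfl⟩; exact hfnn k
    · intro x hx y hy a b ha hb hab
      show 0 ≤ᵐ[P] (a • x + b • y)
      filter_upwards [hx, hy] with ω h1 h2
      simp only [Pi.zero_apply, Pi.add_apply, Pi.smul_apply, smul_eq_mul] at *
      positivity
  exact this hb

lemma head_le (f : ℕ → Ω → ℝ) (N : ℕ) {c : Ω → ℝ}
    (hc : c ∈ convexHull ℝ (f '' {k | k < N})) (ω : Ω) :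
    c ω ≤ ∑ k ∈ Finset.range N, max (f k ω) 0 := by
  set M : Ω → ℝ := fun ω => ∑ k ∈ Finset.range N, max (f k ω) 0 with hM
  have : convexHull ℝ (f '' {k | k < N}) ⊆ {g : Ω → ℝ | ∀ ω, g ω ≤ M ω} := by
    apply convexHull_min
    · rintro g ⟨k, hk, rfl⟩ ω
      calc f k ω ≤ max (f k ω) 0 := le_max_left _ _
        _ ≤ M ω := Finset.single_le_sum (f := fun i => max (f i ω) 0)
            (fun i _ => le_max_right _ _) (Finset.mem_range.2 hk)
    · intro x hx y hy a b ha hb hab ω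
      have h1 : a * x ω ≤ a * M ω := mul_le_mul_of_nonneg_left (hx ω) ha
      have h2 : b * y ω ≤ b * M ω := mul_le_mul_of_nonneg_left (hy ω) hb
      have h3 : a * M ω + b * M ω = M ω := by rw [← add_mul, hab, one_mul]
      simp only [Pi.add_apply, Pi.smul_apply, smul_eq_mul]
      linarith
  exact this hc ω

variable (P : Measure Ω) [IsProbabilityMeasure P]

lemma expInt {b : Ω → ℝ} (hb : Measurable b) (hbn : 0 ≤ᵐ[P] b) :
    Integrable (fun ω => Real.exp (-(b ω))) P := by
  apply Integrable.mono' (integrable_const (1:ℝ))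
    (((hb.neg).exp).aestronglyMeasurable)
  filter_upwards [hbn] with ω h
  rw [Real.norm_eq_abs, abs_of_pos (Real.exp_pos _)]
  simp only [Pi.zero_apply] at h
  exact Real.exp_le_one_iff.2 (by simp only [Pi.neg_apply]; linarith)

lemma expInt_nonneg {b : Ω → ℝ} :
    0 ≤ ∫ ω, Real.exp (-(b ω)) ∂P :=
  integral_nonneg (fun ω => (Real.exp_pos _).le)

lemma expInt_le_one {b : Ω → ℝ} (hb : Measurable b) (hbn : 0 ≤ᵐ[P] b) :
    ∫ ω, Real.exp (-(b ω)) ∂P ≤ 1 := by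
  calc ∫ ω, Real.exp (-(b ω)) ∂P ≤ ∫ _, (1:ℝ) ∂P := by
        apply integral_mono_ae (expInt P hb hbn) (integrable_const 1)
        filter_upwards [hbn] with ω h
        simp only [Pi.zero_apply] at h
        exact Real.exp_le_one_iff.2 (by linarith)
    _ = 1 := by simp

end Helpers

theorem stmt13 {Ω : Type*} [MeasurableSpace Ω] (P : Measure Ω)
    [IsProbabilityMeasure P]
    (f : ℕ → Ω → ℝ)
    (hfmeas : ∀ n, Measurable (f n)) (hfnn : ∀ n, 0 ≤ᵐ[P] f n)
    (hfin : ∀ (h : ℕ → Ω → ℝ) (g : Ω → ENNReal), FwdConvexCombos f h → Measurable g →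
      (∀ᵐ ω ∂P, Tendsto (fun n => ENNReal.ofReal (h n ω)) atTop (nhds (g ω))) →
      ∀ᵐ ω ∂P, g ω < ⊤) :
    BddInProbability P (convexHull ℝ (Set.range f)) := by
  classical
  by_contra hcon
  set C : ℕ → Set (Ω → ℝ) := fun n => convexHull ℝ {g : Ω → ℝ | ∃ k, n ≤ k ∧ g = f k}
    with hCdef
  have hC0 : convexHull ℝ (Set.range f) = C 0 := by
    rw [hCdef]; congr 1; ext g
    simp only [Set.mem_range, Set.mem_setOf_eq, Nat.zero_le, true_and]
    exact ⟨fun ⟨k, h⟩ => ⟨k, h.symm⟩, fun ⟨k, h⟩ => ⟨k, h.symm⟩⟩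
  have hCmem : ∀ n, f n ∈ C n := fun n => subset_convexHull ℝ _ ⟨n, le_refl n, rfl⟩
  have hCanti : ∀ {n m : ℕ}, n ≤ m → C m ⊆ C n := fun h => tHull_anti f h
  have hCmeas : ∀ {n : ℕ} {b : Ω → ℝ}, b ∈ C n → Measurable b :=
    fun hb => tHull_meas f hfmeas hb
  have hCnn : ∀ {n : ℕ} {b : Ω → ℝ}, b ∈ C n → 0 ≤ᵐ[P] b :=
    fun hb => tHull_nonneg f hfnn hb
  have hCconv : ∀ n, Convex ℝ (C n) := fun n => convex_convexHull ℝ _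
  -- Step A : get ε₁
  set S : ℝ → ENNReal := fun ℓ => ⨆ b ∈ convexHull ℝ (Set.range f), P {ω | ℓ < b ω} with hSdef
  have hSanti : Antitone S := by
    intro ℓ ℓ' hle
    exact iSup_mono fun b => iSup_mono fun hb =>
      measure_mono (fun ω (hω : ℓ' < b ω) => lt_of_le_of_lt hle hω)
  set ε₁ : ENNReal := ⨅ ℓ : ℝ, S ℓ with hε₁def
  have hε₁ne : ε₁ ≠ 0 := by
    intro h0
    apply hcon
    have := tendsto_atTop_iInf hSanti
    rw [← hε₁def, h0] at this
    exact this
  have hS1 : ∀ ℓ, S ℓ ≤ 1 := fun ℓ => iSup_le fun b => iSup_le fun _ => prob_le_one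
  have hε₁1 : ε₁ ≤ 1 := le_trans (iInf_le _ 0) (hS1 0)
  have hε₁top : ε₁ ≠ ⊤ := fun h => by simp [h] at hε₁1
  set ε₂ : ENNReal := ε₁ / 2 / 2 with hε₂def
  have hε₂ne : ε₂ ≠ 0 := by
    rw [hε₂def]
    simp only [ne_eq, ENNReal.div_eq_zero_iff, ENNReal.ofNat_ne_top, or_false]
    exact hε₁ne
  have hε₂le : ε₂ ≤ 1 := by
    rw [hε₂def]
    calc ε₁ / 2 / 2 ≤ ε₁ := le_trans (ENNReal.half_le_self) (ENNReal.half_le_self)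
      _ ≤ 1 := hε₁1
  have hε₂top : ε₂ ≠ ⊤ := fun h => by simp [h] at hε₂le
  have hwit : ∀ ℓ : ℝ, ∃ b ∈ C 0, ε₁ / 2 < P {ω | ℓ < b ω} := by
    intro ℓ
    have h1 : ε₁ / 2 < S ℓ :=
      lt_of_lt_of_le (ENNReal.half_lt_self hε₁ne hε₁top) (iInf_le _ ℓ)
    rw [hSdef] at h1
    simp only [lt_iSup_iff] at h1
    obtain ⟨b, hb, hlt⟩ := h1
    exact ⟨b, hC0 ▸ hb, hlt⟩
  -- Step B+C : tail unboundedness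
  have htail : ∀ N : ℕ, 1 ≤ N → ∀ ℓ : ℝ, ∃ d ∈ C N, ε₂ ≤ P {ω | ℓ < d ω} := by
    intro N hN ℓ
    set M : Ω → ℝ := fun ω => ∑ k ∈ Finset.range N, max (f k ω) 0 with hMdef
    have hMmeas : Measurable M :=
      Finset.measurable_sum _ (fun k _ => (hfmeas k).max measurable_const)
    set A : ℕ → Set Ω := fun j => {ω | (j:ℝ) < M ω} with hAdef
    have hM0 : Tendsto (fun j : ℕ => P (A j)) atTop (nhds 0) := by
      have h1 : (⋂ j : ℕ, A j) = ∅ := by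
        ext ω
        simp only [hAdef, Set.mem_iInter, Set.mem_setOf_eq, Set.mem_empty_iff_false, iff_false,
          not_forall, not_lt]
        obtain ⟨j, hj⟩ := exists_nat_gt (M ω)
        exact ⟨j, hj.le⟩
      have hanti : Antitone A := by
        intro i j hij ω hω
        simp only [hAdef, Set.mem_setOf_eq] at *
        exact lt_of_le_of_lt (Nat.cast_le.2 hij : (i:ℝ) ≤ (j:ℝ)) hω
      have h2 := tendsto_measure_iInter_atTop (μ := P)
        (fun j => ((measurableSet_lt measurable_const hMmeas)).nullMeasurableSet)
        hanti ⟨0, measure_ne_top P _⟩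
      rw [h1, measure_empty] at h2
      exact h2
    obtain ⟨j₀, hj₀⟩ : ∃ j : ℕ, P (A j) < ε₂ := by
      have := (hM0.eventually_lt_const (lt_of_le_of_ne (zero_le : (0:ENNReal) ≤ ε₂) (Ne.symm hε₂ne))).exists
      exact this
    set ℓ' : ℝ := max ℓ (j₀:ℝ) with hℓ'def
    obtain ⟨b, hbC, hb⟩ := hwit ℓ'
    have hsplit : {g : Ω → ℝ | ∃ k, 0 ≤ k ∧ g = f k} =
        (f '' {k | k < N}) ∪ {g : Ω → ℝ | ∃ k, N ≤ k ∧ g = f k} := by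
      ext g
      constructor
      · rintro ⟨k, -, rfl⟩
        by_cases h : k < N
        · exact Or.inl ⟨k, h, rfl⟩
        · exact Or.inr ⟨k, not_lt.1 h, rfl⟩
      · rintro (⟨k, -, rfl⟩ | ⟨k, -, rfl⟩) <;> exact ⟨k, Nat.zero_le k, rfl⟩
    have hbj : b ∈ convexJoin ℝ (convexHull ℝ (f '' {k | k < N})) (C N) := by
      have hb0 : b ∈ convexHull ℝ {g : Ω → ℝ | ∃ k, 0 ≤ k ∧ g = f k} := hbC
      have hne1 : (f '' {k | k < N}).Nonempty :=
        ⟨f 0, Set.mem_image_of_mem f (show (0:ℕ) ∈ {k | k < N} from hN)⟩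
      have hne2 : ({g : Ω → ℝ | ∃ k, N ≤ k ∧ g = f k}).Nonempty := ⟨f N, N, le_refl N, rfl⟩
      rw [hsplit, convexHull_union hne1 hne2] at hb0
      exact hb0
    obtain ⟨c, hc, d, hd, p, q, hp, hq, hpq, hb_eq⟩ := mem_convexJoin.1 hbj
    have hsub : {ω | ℓ' < b ω} ⊆ {ω | ℓ' < c ω} ∪ {ω | ℓ' < d ω} := by
      intro ω hω
      by_contra hcon2
      simp only [Set.mem_union, Set.mem_setOf_eq, not_or, not_lt] at hcon2
      have hbω : b ω = p * c ω + q * d ω := by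
        rw [← hb_eq]; simp [smul_eq_mul]
      have : b ω ≤ ℓ' := by
        rw [hbω]
        calc p * c ω + q * d ω ≤ p * ℓ' + q * ℓ' := by
              exact add_le_add (mul_le_mul_of_nonneg_left hcon2.1 hp)
                (mul_le_mul_of_nonneg_left hcon2.2 hq)
          _ = ℓ' := by rw [← add_mul, hpq, one_mul]
      exact absurd hω (not_lt.2 this)
    have hcM : {ω | ℓ' < c ω} ⊆ A j₀ := by
      intro ω hω
      have h1 : (j₀:ℝ) ≤ ℓ' := le_max_right _ _
      simp only [Set.mem_setOf_eq] at hω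
      show (j₀:ℝ) < M ω
      exact lt_of_le_of_lt h1 (lt_of_lt_of_le hω (head_le f N hc ω))
    have key : ε₂ ≤ P {ω | ℓ' < d ω} := by
      by_contra hlt
      push_neg at hlt
      have h1 : P {ω | ℓ' < b ω} ≤ P {ω | ℓ' < c ω} + P {ω | ℓ' < d ω} :=
        (measure_mono hsub).trans (measure_union_le _ _)
      have h2 : P {ω | ℓ' < c ω} ≤ P (A j₀) := measure_mono hcM
      have h3 : P {ω | ℓ' < b ω} < ε₂ + ε₂ :=
        lt_of_le_of_lt h1 (ENNReal.add_lt_add (lt_of_le_of_lt h2 hj₀) hlt)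
      have h4 : ε₂ + ε₂ = ε₁ / 2 := ENNReal.add_halves (ε₁ / 2)
      rw [h4] at h3
      exact absurd hb (not_lt.2 h3.le)
    refine ⟨d, hd, le_trans key (measure_mono ?_)⟩
    intro ω hω
    simp only [Set.mem_setOf_eq] at hω ⊢
    exact lt_of_le_of_lt (le_max_left ℓ (j₀:ℝ)) hω
  -- Step D : minimization
  set v : (Ω → ℝ) → ℝ := fun b => ∫ ω, Real.exp (-(b ω)) ∂P with hvdef
  have hv0 : ∀ {n : ℕ} {b : Ω → ℝ}, b ∈ C n → 0 ≤ v b := fun _ => expInt_nonneg P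
  have hv1 : ∀ {n : ℕ} {b : Ω → ℝ}, b ∈ C n → v b ≤ 1 :=
    fun hb => expInt_le_one P (hCmeas hb) (hCnn hb)
  set sn : ℕ → ℝ := fun n => sInf (v '' C n) with hsndef
  have hsnne : ∀ n, (v '' C n).Nonempty := fun n => ⟨v (f n), f n, hCmem n, rfl⟩
  have hsnbdd : ∀ n, BddBelow (v '' C n) := by
    intro n
    refine ⟨0, ?_⟩
    rintro x ⟨b, hb, rfl⟩
    exact hv0 hb
  have hsnmono : Monotone sn := fun n m h =>
    csInf_le_csInf (hsnbdd n) (hsnne m) (Set.image_mono (hCanti h))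
  have hsn1 : ∀ n, sn n ≤ 1 := fun n =>
    le_trans (csInf_le (hsnbdd n) ⟨f n, hCmem n, rfl⟩) (hv1 (hCmem n))
  set s : ℝ := ⨆ n, sn n with hsdef
  have hsbdd : BddAbove (Set.range sn) := by
    refine ⟨1, ?_⟩
    rintro x ⟨n, rfl⟩
    exact hsn1 n
  have hsle : ∀ n, sn n ≤ s := fun n => le_ciSup hsbdd n
  have hstend : Tendsto sn atTop (nhds s) := tendsto_atTop_ciSup hsnmono hsbdd
  have hφex : ∀ j : ℕ, ∃ N : ℕ, 1 ≤ N ∧ j ≤ N ∧ s - (4:ℝ)⁻¹^j ≤ sn N := by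
    intro j
    have hpos : (0:ℝ) < 4⁻¹^j := by positivity
    obtain ⟨n, hn⟩ := (hstend.eventually (eventually_gt_nhds
      (by linarith : s - (4:ℝ)⁻¹^j < s))).exists
    refine ⟨max (max n j) 1, le_max_right _ _,
      le_trans (le_max_right n j) (le_max_left _ _), ?_⟩
    exact le_trans hn.le (hsnmono (le_trans (le_max_left n j) (le_max_left _ _)))
  choose φ hφ1 hφj hφs using hφex
  have hHex : ∀ j : ℕ, ∃ b ∈ C (φ j), v b < sn (φ j) + (4:ℝ)⁻¹^j := by
    intro j
    have hpos : (0:ℝ) < 4⁻¹^j := by positivity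
    obtain ⟨x, ⟨b, hb, rfl⟩, hx⟩ :=
      exists_lt_of_csInf_lt (hsnne (φ j)) (lt_add_of_pos_right (sn (φ j)) hpos)
    exact ⟨b, hb, hx⟩
  choose H hHC hHv using hHex
  have hHfwd : FwdConvexCombos f H := fun n => hCanti (hφj n) (hHC n)
  have hHmeas : ∀ j, Measurable (H j) := fun j => hCmeas (hHC j)
  have hHnn : ∀ j, 0 ≤ᵐ[P] H j := fun j => hCnn (hHC j)
  set F : ℕ → Ω → ℝ := fun j ω => Real.exp (-(H j ω)) with hFdef
  have hFmeas : ∀ j, Measurable (F j) := fun j => ((hHmeas j).neg).exp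
  have hFint : ∀ j, Integrable (F j) P := fun j => expInt P (hHmeas j) (hHnn j)
  have hsnle_vw : ∀ {n : ℕ} {w : Ω → ℝ}, w ∈ C n → sn n ≤ v w :=
    fun hw => csInf_le (hsnbdd _) ⟨_, hw, rfl⟩
  have hFsq_int : ∀ j, Integrable (fun ω => (F (j+1) ω - F j ω)^2) P := by
    intro j
    apply Integrable.mono' (integrable_const (1:ℝ))
      ((((hFmeas (j+1)).sub (hFmeas j)).pow_const 2).aestronglyMeasurable)
    filter_upwards [hHnn j, hHnn (j+1)] with ω h1 h2
    simp only [Pi.zero_apply] at h1 h2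
    have e1 : 0 < F (j+1) ω := Real.exp_pos _
    have e2 : 0 < F j ω := Real.exp_pos _
    have e3 : F (j+1) ω ≤ 1 := Real.exp_le_one_iff.2 (by linarith)
    have e4 : F j ω ≤ 1 := Real.exp_le_one_iff.2 (by linarith)
    rw [Real.norm_eq_abs, abs_of_nonneg (sq_nonneg _)]
    simp only [Pi.sub_apply]; nlinarith
  have hgap : ∀ j : ℕ, ∫ ω, (F (j+1) ω - F j ω)^2 ∂P ≤ 16 * (4:ℝ)⁻¹^j := by
    intro j
    set m : ℕ := min (φ j) (φ (j+1)) with hmdef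
    set w : Ω → ℝ := (2⁻¹ : ℝ) • H j + (2⁻¹ : ℝ) • H (j+1) with hwdef
    have hwC : w ∈ C m := (hCconv m) (hCanti (min_le_left _ _) (hHC j))
      (hCanti (min_le_right _ _) (hHC (j+1))) (by norm_num) (by norm_num) (by norm_num)
    have hsnm : s - (4:ℝ)⁻¹^j ≤ sn m := by
      rcases le_total (φ j) (φ (j+1)) with h | h
      · rw [hmdef, min_eq_left h]; exact hφs j
      · rw [hmdef, min_eq_right h]
        have h1 := hφs (j+1)
        have h4 : (4:ℝ)⁻¹^(j+1) ≤ 4⁻¹^j :=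
          pow_le_pow_of_le_one (by norm_num) (by norm_num) (Nat.le_succ j)
        linarith
    have hwmeas : Measurable w := hCmeas hwC
    have hwnn : 0 ≤ᵐ[P] w := hCnn hwC
    have hpt : ∀ᵐ ω ∂P, (F (j+1) ω - F j ω)^2 ≤
        8 * ((F j ω + F (j+1) ω)/2 - Real.exp (-(w ω))) := by
      filter_upwards [hHnn j, hHnn (j+1)] with ω h1 h2
      simp only [Pi.zero_apply] at h1 h2
      have hwω : w ω = (H j ω + H (j+1) ω)/2 := by
        simp only [hwdef, Pi.add_apply, Pi.smul_apply, smul_eq_mul]; ring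
      rw [hwω]
      calc (F (j+1) ω - F j ω)^2 = (F j ω - F (j+1) ω)^2 := by ring
        _ ≤ _ := mid_bound h1 h2
    have hIrhs : Integrable (fun ω => 8 * ((F j ω + F (j+1) ω)/2 - Real.exp (-(w ω)))) P :=
      (((((hFint j).add (hFint (j+1)))).div_const 2).sub (expInt P hwmeas hwnn)).const_mul 8
    have hint : ∫ ω, (F (j+1) ω - F j ω)^2 ∂P ≤
        8 * ((v (H j) + v (H (j+1)))/2 - v w) := by
      calc ∫ ω, (F (j+1) ω - F j ω)^2 ∂P
          ≤ ∫ ω, 8 * ((F j ω + F (j+1) ω)/2 - Real.exp (-(w ω))) ∂P :=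
            integral_mono_ae (hFsq_int j) hIrhs hpt
        _ = 8 * ((v (H j) + v (H (j+1)))/2 - v w) := by
            have i1 : Integrable (fun ω => (F j ω + F (j+1) ω)/2) P :=
              ((hFint j).add (hFint (j+1))).div_const 2
            have i2 : Integrable (fun ω => Real.exp (-(w ω))) P := expInt P hwmeas hwnn
            have e1 : (∫ ω, 8 * ((F j ω + F (j+1) ω)/2 - Real.exp (-(w ω))) ∂P)
                = 8 * ∫ ω, ((F j ω + F (j+1) ω)/2 - Real.exp (-(w ω))) ∂P :=
              integral_const_mul 8 _
            have e2 : (∫ ω, ((F j ω + F (j+1) ω)/2 - Real.exp (-(w ω))) ∂P)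
                = (∫ ω, (F j ω + F (j+1) ω)/2 ∂P) - ∫ ω, Real.exp (-(w ω)) ∂P :=
              integral_sub i1 i2
            have e3 : (∫ ω, (F j ω + F (j+1) ω)/2 ∂P)
                = (∫ ω, (F j ω + F (j+1) ω) ∂P)/2 := integral_div 2 _
            have e4 : (∫ ω, (F j ω + F (j+1) ω) ∂P)
                = (∫ ω, F j ω ∂P) + ∫ ω, F (j+1) ω ∂P := integral_add (hFint j) (hFint (j+1))
            have e5 : v (H j) = ∫ ω, F j ω ∂P := rfl
            have e6 : v (H (j+1)) = ∫ ω, F (j+1) ω ∂P := rfl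
            have e7 : v w = ∫ ω, Real.exp (-(w ω)) ∂P := rfl
            rw [e1, e2, e3, e4, e5, e6, e7]
    have g1 : v (H j) < s + (4:ℝ)⁻¹^j := lt_of_lt_of_le (hHv j) (by linarith [hsle (φ j)])
    have g2 : v (H (j+1)) < s + (4:ℝ)⁻¹^j := by
      have h4 : (4:ℝ)⁻¹^(j+1) ≤ 4⁻¹^j :=
        pow_le_pow_of_le_one (by norm_num) (by norm_num) (Nat.le_succ j)
      have := hHv (j+1)
      have := hsle (φ (j+1))
      linarith
    have g3 : s - (4:ℝ)⁻¹^j ≤ v w := le_trans hsnm (hsnle_vw hwC)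
    linarith
  have hL1 : ∀ j : ℕ, ∫ ω, |F (j+1) ω - F j ω| ∂P ≤ 4 * (2:ℝ)⁻¹^j := by
    intro j
    set c : ℝ := 4 * (2:ℝ)⁻¹^j with hcdef
    have hc0 : 0 < c := by positivity
    have hcsq : c^2 = 16 * (4:ℝ)⁻¹^j := by
      have : ((2:ℝ)⁻¹^j)^2 = (4:ℝ)⁻¹^j := by
        rw [← pow_mul, mul_comm, pow_mul]; norm_num
      rw [hcdef]; nlinarith [this]
    have hpt : ∀ ω, |F (j+1) ω - F j ω| ≤ ((F (j+1) ω - F j ω)^2 + c^2)/(2*c) := by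
      intro ω
      rw [le_div_iff₀ (by positivity)]
      nlinarith [sq_nonneg (|F (j+1) ω - F j ω| - c), sq_abs (F (j+1) ω - F j ω),
        abs_nonneg (F (j+1) ω - F j ω)]
    have hIlhs : Integrable (fun ω => |F (j+1) ω - F j ω|) P :=
      ((hFint (j+1)).sub (hFint j)).abs
    have hIrhs : Integrable (fun ω => ((F (j+1) ω - F j ω)^2 + c^2)/(2*c)) P :=
      ((hFsq_int j).add (integrable_const (c^2))).div_const (2*c)
    calc ∫ ω, |F (j+1) ω - F j ω| ∂P
        ≤ ∫ ω, ((F (j+1) ω - F j ω)^2 + c^2)/(2*c) ∂P :=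
          integral_mono hIlhs hIrhs hpt
      _ = ((∫ ω, (F (j+1) ω - F j ω)^2 ∂P) + c^2)/(2*c) := by
          rw [integral_div, integral_add (hFsq_int j) (integrable_const _), integral_const]
          simp [measure_univ]
      _ ≤ (16 * (4:ℝ)⁻¹^j + c^2)/(2*c) := by
          have := hgap j
          gcongr
      _ = c := by
          rw [← hcsq]
          rw [div_eq_iff (by positivity : (2*c) ≠ 0)]
          ring
  -- summability and a.e. convergence
  have hsumfin : (∑' j : ℕ, ∫⁻ ω, ‖F (j+1) ω - F j ω‖₊ ∂P) ≠ ⊤ := by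
    have hbound : ∀ j : ℕ, (∫⁻ ω, ‖F (j+1) ω - F j ω‖₊ ∂P) ≤ ENNReal.ofReal (4 * (2:ℝ)⁻¹^j) := by
      intro j
      have e : ENNReal.ofReal (∫ ω, ‖F (j+1) ω - F j ω‖ ∂P)
          = ∫⁻ ω, (‖F (j+1) ω - F j ω‖₊ : ENNReal) ∂P :=
        ofReal_integral_norm_eq_lintegral_enorm ((hFint (j+1)).sub (hFint j))
      rw [← e]
      apply ENNReal.ofReal_le_ofReal
      simpa [Real.norm_eq_abs] using hL1 j
    have hgeo : (∑' j : ℕ, ENNReal.ofReal (4 * (2:ℝ)⁻¹^j)) < ⊤ := by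
      have heq : ∀ j : ℕ, ENNReal.ofReal (4 * (2:ℝ)⁻¹^j)
          = ENNReal.ofReal 4 * (ENNReal.ofReal 2⁻¹)^j := by
        intro j
        rw [ENNReal.ofReal_mul (by norm_num), ENNReal.ofReal_pow (by norm_num)]
      calc (∑' j : ℕ, ENNReal.ofReal (4 * (2:ℝ)⁻¹^j))
          = ∑' j : ℕ, ENNReal.ofReal 4 * (ENNReal.ofReal 2⁻¹)^j := by
            exact tsum_congr heq
        _ = ENNReal.ofReal 4 * ∑' j : ℕ, (ENNReal.ofReal 2⁻¹)^j := ENNReal.tsum_mul_left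
        _ < ⊤ := by
            apply ENNReal.mul_lt_top ENNReal.ofReal_lt_top
            rw [ENNReal.tsum_geometric]
            apply ENNReal.inv_lt_top.2
            rw [tsub_pos_iff_lt]
            exact ENNReal.ofReal_lt_one.2 (by norm_num)
    exact (lt_of_le_of_lt (ENNReal.tsum_le_tsum hbound) hgeo).ne
  have haesum : ∀ᵐ ω ∂P, (∑' j : ℕ, (‖F (j+1) ω - F j ω‖₊ : ENNReal)) ≠ ⊤ := by
    have hmeas : ∀ j : ℕ, Measurable (fun ω => (‖F (j+1) ω - F j ω‖₊ : ENNReal)) :=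
      fun j => ((hFmeas (j+1)).sub (hFmeas j)).nnnorm.coe_nnreal_ennreal
    have hlt : (∫⁻ ω, (∑' j : ℕ, (‖F (j+1) ω - F j ω‖₊ : ENNReal)) ∂P) ≠ ⊤ := by
      rw [lintegral_tsum (fun j => (hmeas j).aemeasurable)]
      exact hsumfin
    filter_upwards [ae_lt_top (Measurable.ennreal_tsum hmeas) hlt] with ω h
    exact h.ne
  have hptconv : ∀ᵐ ω ∂P, ∃ L : ℝ, 0 ≤ L ∧ Tendsto (fun j => F j ω) atTop (nhds L) := by
    filter_upwards [haesum] with ω hω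
    have h1 : Summable (fun j => ‖F (j+1) ω - F j ω‖₊) :=
      ENNReal.tsum_coe_ne_top_iff_summable.1 hω
    have h2 : Summable (fun j => F (j+1) ω - F j ω) := by
      apply Summable.of_norm
      have := NNReal.summable_coe.2 h1
      simpa [coe_nnnorm] using this
    obtain ⟨l, hl⟩ := h2
    have h3 : Tendsto (fun n => ∑ i ∈ Finset.range n, (F (i+1) ω - F i ω)) atTop (nhds l) :=
      hl.tendsto_sum_nat
    have h4 : ∀ n, (∑ i ∈ Finset.range n, (F (i+1) ω - F i ω)) = F n ω - F 0 ω :=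
      fun n => Finset.sum_range_sub (fun i => F i ω) n
    have h5 : Tendsto (fun n => F n ω) atTop (nhds (l + F 0 ω)) := by
      have h6 := h3.add_const (F 0 ω)
      apply h6.congr
      intro n
      rw [h4 n]; ring
    exact ⟨l + F 0 ω, ge_of_tendsto' h5 (fun j => (Real.exp_pos _).le), h5⟩
  set Gfun : Ω → ENNReal := fun ω => limsup (fun j => ENNReal.ofReal (F j ω)) atTop with hGdef
  have hGmeas : Measurable Gfun :=
    Measurable.limsup (fun j => ENNReal.measurable_ofReal.comp (hFmeas j))
  set Greal : Ω → ℝ := fun ω => (Gfun ω).toReal with hGrdef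
  have hGrmeas : Measurable Greal := hGmeas.ennreal_toReal
  have hGr0 : ∀ ω, 0 ≤ Greal ω := fun ω => ENNReal.toReal_nonneg
  have hGlim : ∀ᵐ ω ∂P, Tendsto (fun j => F j ω) atTop (nhds (Greal ω)) ∧
      Gfun ω = ENNReal.ofReal (Greal ω) := by
    filter_upwards [hptconv] with ω hω
    obtain ⟨L, hL0, hLt⟩ := hω
    have h1 : Tendsto (fun j => ENNReal.ofReal (F j ω)) atTop (nhds (ENNReal.ofReal L)) :=
      (ENNReal.continuous_ofReal.tendsto L).comp hLt
    have h2 : Gfun ω = ENNReal.ofReal L := h1.limsup_eq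
    have h3 : Greal ω = L := by
      rw [hGrdef]; simp only [h2, ENNReal.toReal_ofReal hL0]
    rw [h3, h2]
    exact ⟨hLt, rfl⟩
  set g : Ω → ENNReal :=
    fun ω => if Gfun ω = 0 then ⊤ else ENNReal.ofReal (-Real.log (Greal ω)) with hgdef
  have hgmeas : Measurable g := by
    apply Measurable.ite (hGmeas (measurableSet_singleton 0)) measurable_const
    exact ENNReal.measurable_ofReal.comp ((Real.measurable_log.comp hGrmeas).neg)
  have hofR : ∀ᵐ ω ∂P, Tendsto (fun j => ENNReal.ofReal (H j ω)) atTop (nhds (g ω)) := by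
    filter_upwards [hGlim] with ω hω
    obtain ⟨hten, heq⟩ := hω
    by_cases hG : Gfun ω = 0
    · have hGr : Greal ω = 0 := by rw [hGrdef]; simp only [hG, ENNReal.toReal_zero]
      have hF0 : Tendsto (fun j => F j ω) atTop (nhds 0) := by rw [← hGr]; exact hten
      have h1 : Tendsto (fun j => -(H j ω)) atTop atBot :=
        Real.tendsto_exp_comp_nhds_zero.1 hF0
      have hHtop : Tendsto (fun j => H j ω) atTop atTop := tendsto_neg_atBot_iff.1 h1
      have h2 : Tendsto (fun j => ENNReal.ofReal (H j ω)) atTop (nhds ⊤) :=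
        ENNReal.tendsto_ofReal_atTop.comp hHtop
      have h3 : g ω = ⊤ := by rw [hgdef]; simp only [hG, if_true, if_pos]
      rw [h3]; exact h2
    · have hGrpos : 0 < Greal ω := by
        rcases lt_or_eq_of_le (hGr0 ω) with h | h
        · exact h
        · exfalso; apply hG; rw [heq, ← h]; simp
      have hlog : Tendsto (fun j => Real.log (F j ω)) atTop (nhds (Real.log (Greal ω))) :=
        ((Real.continuousAt_log hGrpos.ne').tendsto).comp hten
      have hHt : Tendsto (fun j => H j ω) atTop (nhds (-Real.log (Greal ω))) := by
        have hlogF : ∀ j, Real.log (F j ω) = -(H j ω) := fun j => Real.log_exp _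
        have := hlog.neg
        apply this.congr
        intro j
        rw [hlogF j]; ring
      have h2 : Tendsto (fun j => ENNReal.ofReal (H j ω)) atTop
          (nhds (ENNReal.ofReal (-Real.log (Greal ω)))) :=
        (ENNReal.continuous_ofReal.tendsto _).comp hHt
      have h3 : g ω = ENNReal.ofReal (-Real.log (Greal ω)) := by
        rw [hgdef]; simp only [if_neg hG]
      rw [h3]; exact h2
  have hfinite := hfin H g hHfwd hgmeas hofR
  have hGrpos_ae : ∀ᵐ ω ∂P, 0 < Greal ω := by
    filter_upwards [hfinite, hGlim] with ω h1 hω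
    obtain ⟨hten, heq⟩ := hω
    by_contra hle
    push_neg at hle
    have h0 : Greal ω = 0 := le_antisymm hle (hGr0 ω)
    have hG : Gfun ω = 0 := by rw [heq, h0]; simp
    rw [hgdef] at h1
    simp only [hG, if_true, if_pos] at h1
    exact absurd h1 (lt_irrefl ⊤)
  have hδex : ∃ δ : ℝ, 0 < δ ∧ P {ω | Greal ω < δ} < ε₂ / 2 := by
    set B : ℕ → Set Ω := fun k => {ω | Greal ω < ((k:ℝ)+1)⁻¹} with hBdef
    have hBmeas : ∀ k, MeasurableSet (B k) :=
      fun k => measurableSet_lt hGrmeas measurable_const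
    have hBanti : Antitone B := by
      intro i j hij ω hω
      simp only [hBdef, Set.mem_setOf_eq] at *
      have : ((j:ℝ)+1)⁻¹ ≤ ((i:ℝ)+1)⁻¹ := by
        apply inv_anti₀ (by positivity)
        have : (i:ℝ) ≤ (j:ℝ) := Nat.cast_le.2 hij
        linarith
      exact lt_of_lt_of_le hω this
    have hBint : (⋂ k, B k) ⊆ {ω | ¬(0 < Greal ω)} := by
      intro ω hω
      simp only [hBdef, Set.mem_iInter, Set.mem_setOf_eq] at hω ⊢
      intro hpos
      obtain ⟨k, hk⟩ := exists_nat_gt (Greal ω)⁻¹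
      have h1 : (Greal ω)⁻¹ < (k:ℝ) + 1 := by linarith
      have h2 : ((k:ℝ)+1)⁻¹ < Greal ω := by
        rw [inv_lt_comm₀ (by positivity) hpos]
        exact h1
      exact absurd (hω k) (not_lt.2 h2.le)
    have hnull : P (⋂ k, B k) = 0 := by
      apply measure_mono_null hBint
      have := hGrpos_ae
      rw [ae_iff] at this
      exact this
    have htend := tendsto_measure_iInter_atTop (μ := P)
      (fun k => (hBmeas k).nullMeasurableSet) hBanti ⟨0, measure_ne_top P _⟩
    rw [hnull] at htend
    have hpos : (0:ENNReal) < ε₂/2 := by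
      apply lt_of_le_of_ne zero_le
      intro h
      apply hε₂ne
      rw [eq_comm, ENNReal.div_eq_zero_iff] at h
      rcases h with h | h
      · exact h
      · exact absurd h ENNReal.ofNat_ne_top
    obtain ⟨k, hk⟩ := (htend.eventually_lt_const hpos).exists
    exact ⟨((k:ℝ)+1)⁻¹, by positivity, hk⟩
  have hFle1 : ∀ᵐ ω ∂P, ∀ j, F j ω ≤ 1 := by
    rw [ae_all_iff]
    intro j
    filter_upwards [hHnn j] with ω h
    simp only [Pi.zero_apply] at h
    exact Real.exp_le_one_iff.2 (by linarith)
  have hGr1 : ∀ᵐ ω ∂P, Greal ω ≤ 1 := by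
    filter_upwards [hGlim, hFle1] with ω hω hb
    exact le_of_tendsto hω.1 (Filter.Eventually.of_forall hb)
  have hGrint : Integrable Greal P := by
    apply Integrable.mono' (integrable_const (1:ℝ)) hGrmeas.aestronglyMeasurable
    filter_upwards [hGr1] with ω h
    rw [Real.norm_eq_abs, abs_of_nonneg (hGr0 ω)]
    exact h
  have hL1conv : Tendsto (fun j => ∫ ω, |F j ω - Greal ω| ∂P) atTop (nhds 0) := by
    have h0 : (0:ℝ) = ∫ (_ : Ω), (0:ℝ) ∂P := by simp
    rw [h0]
    apply tendsto_integral_of_dominated_convergence (bound := fun _ => 2)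
    · intro j
      exact (((hFmeas j).sub hGrmeas).abs).aestronglyMeasurable
    · exact integrable_const 2
    · intro j
      filter_upwards [hFle1, hGr1, hHnn j] with ω h1 h2 h3
      simp only [Pi.zero_apply] at h3
      rw [Real.norm_eq_abs, abs_abs]
      have e1 : 0 < F j ω := Real.exp_pos _
      have e2 : F j ω ≤ 1 := h1 j
      have e3 := hGr0 ω
      rw [abs_le]
      constructor <;> linarith
    · filter_upwards [hGlim] with ω hω
      have h1 : Tendsto (fun j => F j ω - Greal ω) atTop (nhds (Greal ω - Greal ω)) :=
        hω.1.sub (tendsto_const_nhds (x := Greal ω) (f := atTop))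
      have h2 := h1.abs
      simp only [sub_self, abs_zero] at h2
      exact h2
  -- final contradiction
  set mR : ℝ := (ε₂/2).toReal with hmRdef
  have hε₂2ne : ε₂/2 ≠ 0 := by
    rw [ne_eq, ENNReal.div_eq_zero_iff]
    push_neg
    exact ⟨hε₂ne, ENNReal.ofNat_ne_top⟩
  have hε₂2top : ε₂/2 ≠ ⊤ := by
    apply ne_top_of_le_ne_top hε₂top
    exact ENNReal.half_le_self
  have hmR0 : 0 < mR := ENNReal.toReal_pos hε₂2ne hε₂2top
  obtain ⟨δ, hδ0, hδP⟩ := hδex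
  set κ : ℝ := δ * mR with hκdef
  have hκ0 : 0 < κ := mul_pos hδ0 hmR0
  have hAlow : ∀ A : Set Ω, MeasurableSet A → ε₂ ≤ P A → κ ≤ ∫ ω in A, Greal ω ∂P := by
    intro A hA hPA
    set B : Set Ω := {ω | δ ≤ Greal ω} with hBdef
    have hBmeas : MeasurableSet B := measurableSet_le measurable_const hGrmeas
    have hP2 : ε₂/2 ≤ P (A ∩ B) := by
      by_contra hlt
      push_neg at hlt
      have hsub : A ⊆ (A ∩ B) ∪ {ω | Greal ω < δ} := by
        intro ω hω
        by_cases h : δ ≤ Greal ω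
        · exact Or.inl ⟨hω, h⟩
        · exact Or.inr (not_le.1 h)
      have h1 : P A ≤ P (A ∩ B) + P {ω | Greal ω < δ} :=
        (measure_mono hsub).trans (measure_union_le _ _)
      have h2 : P A < ε₂/2 + ε₂/2 := lt_of_le_of_lt h1 (ENNReal.add_lt_add hlt hδP)
      rw [ENNReal.add_halves] at h2
      exact absurd hPA (not_le.2 h2)
    have hPAB_fin : P (A ∩ B) ≠ ⊤ := measure_ne_top P _
    have h3 : mR ≤ (P (A ∩ B)).toReal := by
      rw [hmRdef]
      exact (ENNReal.toReal_le_toReal hε₂2top hPAB_fin).2 hP2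
    calc κ = δ * mR := rfl
      _ ≤ δ * (P (A ∩ B)).toReal := mul_le_mul_of_nonneg_left h3 hδ0.le
      _ = δ * (P.restrict A (B)).toReal := by
          rw [Measure.restrict_apply hBmeas, Set.inter_comm]
      _ ≤ ∫ ω in A ∩ B, Greal ω ∂P := by
          rw [Set.inter_comm A B]
          have := setIntegral_ge_of_const_le (μ := P) (s := B ∩ A) (f := Greal)
            (hBmeas.inter hA) (measure_ne_top P _) (fun ω hω => hω.1) (hGrint.integrableOn)
          calc δ * (P.restrict A B).toReal = δ * (P (B ∩ A)).toReal := by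
                rw [Measure.restrict_apply hBmeas, Set.inter_comm]
            _ ≤ _ := by rw [← measureReal_def, mul_comm, ← smul_eq_mul]; exact this
      _ ≤ ∫ ω in A, Greal ω ∂P := by
          apply setIntegral_mono_set hGrint.integrableOn
          · exact ae_restrict_of_ae (Filter.Eventually.of_forall (fun ω => hGr0 ω))
          · exact HasSubset.Subset.eventuallyLE Set.inter_subset_left
  set t : ℝ := min (κ/8) 2⁻¹ with htdef
  have ht0 : 0 < t := lt_min (by positivity) (by norm_num)
  have ht1 : t ≤ 1 := le_trans (min_le_right _ _) (by norm_num)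
  have htκ : t ≤ κ/8 := min_le_left _ _
  set ℓ : ℝ := Real.log 2 / t with hℓdef
  have hℓ0 : 0 < ℓ := div_pos (Real.log_pos one_lt_two) ht0
  have hexp : Real.exp (-(t*ℓ)) = 2⁻¹ := by
    rw [hℓdef, mul_div_cancel₀ _ ht0.ne', Real.exp_neg, Real.exp_log two_pos]
  have h4tend : Tendsto (fun j : ℕ => (4:ℝ)⁻¹^j) atTop (nhds 0) :=
    tendsto_pow_atTop_nhds_zero_of_lt_one (by norm_num) (by norm_num)
  obtain ⟨J2, hJ2⟩ := (h4tend.eventually_lt_const (by positivity : (0:ℝ) < κ/8)).exists_forall_of_atTop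
  obtain ⟨J1, hJ1⟩ : ∃ J1, ∀ j ≥ J1, ∫ ω, |F j ω - Greal ω| ∂P ≤ κ/2 :=
    (hL1conv.eventually_le_const (by positivity : (0:ℝ) < κ/2)).exists_forall_of_atTop
  set j : ℕ := max J1 J2 with hjdef
  obtain ⟨b, hbC, hbP⟩ := htail (φ j) (hφ1 j) ℓ
  set A : Set Ω := {ω | ℓ < b ω} with hAdef
  have hAm : MeasurableSet A := measurableSet_lt measurable_const (hCmeas hbC)
  have hFA : κ/2 ≤ ∫ ω in A, F j ω ∂P := by
    have h1 : κ ≤ ∫ ω in A, Greal ω ∂P := hAlow A hAm hbP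
    have h2 : |∫ ω in A, (F j ω - Greal ω) ∂P| ≤ ∫ ω, |F j ω - Greal ω| ∂P := by
      calc |∫ ω in A, (F j ω - Greal ω) ∂P| ≤ ∫ ω in A, |F j ω - Greal ω| ∂P := by
            have := norm_integral_le_integral_norm (μ := P.restrict A)
              (f := fun ω => F j ω - Greal ω)
            simpa [Real.norm_eq_abs] using this
        _ ≤ ∫ ω, |F j ω - Greal ω| ∂P :=
            setIntegral_le_integral (((hFint j).sub hGrint).abs)
              (Filter.Eventually.of_forall fun ω => abs_nonneg _)
    have h3 : ∫ ω, |F j ω - Greal ω| ∂P ≤ κ/2 := hJ1 j (le_max_left _ _)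
    have h4 : ∫ ω in A, (F j ω - Greal ω) ∂P
        = (∫ ω in A, F j ω ∂P) - ∫ ω in A, Greal ω ∂P :=
      integral_sub ((hFint j).integrableOn) hGrint.integrableOn
    have h5 := (abs_le.1 (h2.trans h3)).1
    linarith
  set w : Ω → ℝ := (1-t) • H j + t • b with hwdef
  have hwC : w ∈ C (φ j) := (hCconv (φ j)) (hHC j) hbC (by linarith) ht0.le (by ring)
  have hwmeas : Measurable w := hCmeas hwC
  have hwnn : 0 ≤ᵐ[P] w := hCnn hwC
  have hpt : ∀ᵐ ω ∂P, Real.exp (-(w ω)) ≤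
      F j ω + t - (1 - Real.exp (-(t*ℓ))) * A.indicator (F j) ω := by
    filter_upwards [hHnn j, hCnn hbC] with ω h1 h2
    simp only [Pi.zero_apply] at h1 h2
    have hwω : w ω = (1-t) * H j ω + t * b ω := by
      simp only [hwdef, Pi.add_apply, Pi.smul_apply, smul_eq_mul]
    rw [hwω]
    by_cases hωA : ω ∈ A
    · rw [Set.indicator_of_mem hωA]
      exact mix_bound_on ht0.le ht1 h1 (le_of_lt hωA) hℓ0.le
    · rw [Set.indicator_of_notMem hωA]
      have := mix_bound_off (t := t) (h := H j ω) (b := b ω) ht0.le ht1 h2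
      simpa using this
  have hIind : Integrable (A.indicator (F j)) P := (hFint j).indicator hAm
  have hIrhs : Integrable
      (fun ω => F j ω + t - (1 - Real.exp (-(t*ℓ))) * A.indicator (F j) ω) P :=
    (((hFint j).add (integrable_const t)).sub (hIind.const_mul _))
  have hvw_le : v w ≤ v (H j) + t - (1 - Real.exp (-(t*ℓ))) * ∫ ω in A, F j ω ∂P := by
    have hmono := integral_mono_ae (expInt P hwmeas hwnn) hIrhs hpt
    have e1a : (∫ ω, (F j ω + t - (1 - Real.exp (-(t*ℓ))) * A.indicator (F j) ω) ∂P)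
        = (∫ ω, (F j ω + t) ∂P) - ∫ ω, (1 - Real.exp (-(t*ℓ))) * A.indicator (F j) ω ∂P :=
      integral_sub ((hFint j).add (integrable_const t)) (hIind.const_mul _)
    have e1b : (∫ ω, (F j ω + t) ∂P) = (∫ ω, F j ω ∂P) + ∫ (_:Ω), t ∂P :=
      integral_add (hFint j) (integrable_const t)
    have e1c : (∫ ω, (1 - Real.exp (-(t*ℓ))) * A.indicator (F j) ω ∂P)
        = (1 - Real.exp (-(t*ℓ))) * ∫ ω, A.indicator (F j) ω ∂P := integral_const_mul _ _
    have e2 : (∫ (_:Ω), t ∂P) = t := by simp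
    have e3 : (∫ ω, A.indicator (F j) ω ∂P) = ∫ ω in A, F j ω ∂P :=
      integral_indicator hAm
    have e5 : v (H j) = ∫ ω, F j ω ∂P := rfl
    calc v w
        ≤ (∫ ω, (F j ω + t - (1 - Real.exp (-(t*ℓ))) * A.indicator (F j) ω) ∂P) := hmono
      _ = v (H j) + t - (1 - Real.exp (-(t*ℓ))) * ∫ ω in A, F j ω ∂P := by
          rw [e1a, e1b, e1c, e2, e3, e5]
  have hsnw : sn (φ j) ≤ v w := hsnle_vw hwC
  have hvHj : v (H j) < sn (φ j) + (4:ℝ)⁻¹^j := hHv j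
  have hhalf : 1 - Real.exp (-(t*ℓ)) = 2⁻¹ := by rw [hexp]; norm_num
  have h4j : (4:ℝ)⁻¹^j < κ/8 := hJ2 j (le_max_right _ _)
  have hquarter : (1 - Real.exp (-(t*ℓ))) * (∫ ω in A, F j ω ∂P) ≥ κ/4 := by
    rw [hhalf]
    linarith
  linarith
end

section
/- Let (Ω, 𝓕, P) be a probability space and (f_n)_{n∈ℕ} a sequence of nonnegative a.e.-finite measurable functions. For n ∈ ℕ, let C_n be the set of all measurable functions h : Ω → [0,∞] that are P-a.e. limits of sequences taking values in the convex hull of {f_k : k ≥ n}, and let S_n be the solid hull of C_n. Then for every measurable g : Ω → [0,∞] with g ∈ S_n for all n ∈ ℕ, there exists h ∈ ⋂_{n∈ℕ} C_n with g ≤ h P-a.e.; that is, ⋂_{n∈ℕ} S_n is the solid hull of ⋂_{n∈ℕ} C_n. -/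
open MeasureTheory Filter Set

/-- The set of all measurable `[0,∞]`-valued functions arising as `P`-a.e. limits of
sequences taking values in the convex hull of `{f k : k ≥ n}`. -/
def LimitsOfConvexTail {Ω : Type*} [MeasurableSpace Ω] (P : MeasureTheory.Measure Ω)
    (f : ℕ → Ω → ℝ) (n : ℕ) : Set (Ω → ENNReal) :=
  {g | Measurable g ∧ ∃ h : ℕ → Ω → ℝ,
    (∀ j, h j ∈ convexHull ℝ {u : Ω → ℝ | ∃ k, n ≤ k ∧ u = f k}) ∧
    ∀ᵐ ω ∂P, Tendsto (fun j => ENNReal.ofReal (h j ω)) atTop (nhds (g ω))}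

/-- The solid hull of a set `A` of `[0,∞]`-valued measurable functions:
all measurable `g` with `g ≤ h` a.e. for some `h ∈ A`. -/
def SolidHull {Ω : Type*} [MeasurableSpace Ω] (P : MeasureTheory.Measure Ω)
    (A : Set (Ω → ENNReal)) : Set (Ω → ENNReal) :=
  {g | Measurable g ∧ ∃ h ∈ A, g ≤ᵐ[P] h}

noncomputable def phiE : ENNReal → ℝ := fun x => (ENNReal.orderIsoUnitIntervalBirational x : ℝ)

lemma phiE_cont : Continuous phiE :=
  continuous_subtype_val.comp ENNReal.orderIsoUnitIntervalBirational.toHomeomorph.continuous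

lemma phiE_mem (x : ENNReal) : phiE x ∈ Icc (0:ℝ) 1 :=
  (ENNReal.orderIsoUnitIntervalBirational x).2

lemma phiE_top : phiE ⊤ = 1 := by
  rw [phiE, ENNReal.orderIsoUnitIntervalBirational_apply_coe]
  simp

lemma phiE_strictMono : StrictMono phiE := fun x y h => by
  have := ENNReal.orderIsoUnitIntervalBirational.strictMono h
  exact_mod_cast this

lemma phiE_lt_one {x : ENNReal} (hx : x ≠ ⊤) : phiE x < 1 := by
  rw [← phiE_top]; exact phiE_strictMono (lt_top_iff_ne_top.2 hx)

lemma phiE_finite {x : ENNReal} (hx : x ≠ ⊤) :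
    phiE x = x.toReal / (1 + x.toReal) := by
  rcases eq_or_ne x 0 with rfl | h0
  · rw [phiE, ENNReal.orderIsoUnitIntervalBirational_apply_coe]; simp
  · have hxpos : (0:ℝ) < x.toReal := ENNReal.toReal_pos h0 hx
    rw [phiE, ENNReal.orderIsoUnitIntervalBirational_apply_coe]
    rw [ENNReal.toReal_inv, ENNReal.toReal_add (by simp [h0]) (by norm_num),
      ENNReal.toReal_inv, ENNReal.toReal_one]
    field_simp

/-- strict midpoint concavity of `phiE`. -/
lemma phiE_midpoint_strict {x y : ENNReal} (hxy : x ≠ y) :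
    (phiE x + phiE y) / 2 < phiE ((x + y) / 2) := by
  have key : ∀ x y : ENNReal, x ≠ ⊤ → y = ⊤ → (phiE x + phiE y) / 2 < phiE ((x + y) / 2) := by
    intro x y hx hy
    subst hy
    have h1 : x + ⊤ = ⊤ := by simp
    have h2 : (⊤ : ENNReal) / 2 = ⊤ := by
      simp [ENNReal.div_eq_top]
    rw [h1, h2, phiE_top]
    have := phiE_lt_one hx
    linarith
  rcases eq_or_ne x ⊤ with rfl | hx
  · rcases eq_or_ne y ⊤ with rfl | hy
    · exact absurd rfl hxy
    · have := key y ⊤ hy rfl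
      rw [add_comm (phiE ⊤) (phiE y), add_comm (⊤:ENNReal) y]
      exact this
  · rcases eq_or_ne y ⊤ with rfl | hy
    · exact key x ⊤ hx rfl
  -- both finite
    have hxyt : x + y ≠ ⊤ := by simp [hx, hy]
    have hmt : (x + y) / 2 ≠ ⊤ := ne_top_of_le_ne_top hxyt ENNReal.half_le_self
    rw [phiE_finite hx, phiE_finite hy, phiE_finite hmt]
    have hm : ((x + y) / 2).toReal = (x.toReal + y.toReal) / 2 := by
      rw [ENNReal.toReal_div, ENNReal.toReal_add hx hy]
      norm_num
    rw [hm]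
    set a := x.toReal
    set b := y.toReal
    have ha : 0 ≤ a := ENNReal.toReal_nonneg
    have hb : 0 ≤ b := ENNReal.toReal_nonneg
    have hab : a ≠ b := fun h => hxy ((ENNReal.toReal_eq_toReal_iff' hx hy).1 h)
    have h1 : (0:ℝ) < 1 + a := by linarith
    have h2 : (0:ℝ) < 1 + b := by linarith
    have h3 : (0:ℝ) < 1 + (a + b) / 2 := by linarith
    rw [div_add_div _ _ (ne_of_gt h1) (ne_of_gt h2), div_div, div_lt_div_iff₀ (by positivity) h3]
    have key2 : (a - b)^2 > 0 :=
      lt_of_le_of_ne (sq_nonneg _) (Ne.symm (pow_ne_zero 2 (sub_ne_zero.2 (by exact fun h => hab (by linarith)))))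
    nlinarith [key2, mul_pos h1 h2]

lemma phiE_midpoint_le (x y : ENNReal) :
    (phiE x + phiE y) / 2 ≤ phiE ((x + y) / 2) := by
  rcases eq_or_ne x y with rfl | h
  · rw [show (x + x) / 2 = x from by rw [ENNReal.add_div]; exact ENNReal.add_halves x]
    ring_nf
    rfl
  · exact le_of_lt (phiE_midpoint_strict h)

lemma phiE_tendsto_transfer {z : ℕ → ENNReal} {l : ℝ}
    (h : Tendsto (fun j => phiE (z j)) atTop (nhds l)) :
    ∃ c, Tendsto z atTop (nhds c) := by
  have hl : l ∈ Icc (0:ℝ) 1 :=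
    isClosed_Icc.mem_of_tendsto h (Eventually.of_forall fun j => phiE_mem _)
  have h2 : Tendsto (fun j => ENNReal.orderIsoUnitIntervalBirational (z j)) atTop
      (nhds (⟨l, hl⟩ : Icc (0:ℝ) 1)) := by
    rw [tendsto_subtype_rng]
    exact h
  refine ⟨ENNReal.orderIsoUnitIntervalBirational.symm ⟨l, hl⟩, ?_⟩
  have hc : Continuous (ENNReal.orderIsoUnitIntervalBirational.symm : Icc (0:ℝ) 1 → ENNReal) :=
    ENNReal.orderIsoUnitIntervalBirational.symm.toHomeomorph.continuous
  have h3 := (hc.tendsto _).comp h2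
  have he : (⇑ENNReal.orderIsoUnitIntervalBirational.symm ∘
      fun j => ENNReal.orderIsoUnitIntervalBirational (z j)) = z := funext fun j => by simp
  rwa [he] at h3

lemma convexHull_mem_meas_nonneg {Ω : Type*} [MeasurableSpace Ω] {P : Measure Ω}
    {S : Set (Ω → ℝ)} (hS : ∀ u ∈ S, Measurable u ∧ 0 ≤ᵐ[P] u)
    {v : Ω → ℝ} (hv : v ∈ convexHull ℝ S) : Measurable v ∧ 0 ≤ᵐ[P] v := by
  have hconv : Convex ℝ {u : Ω → ℝ | Measurable u ∧ 0 ≤ᵐ[P] u} := by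
    intro x hx y hy a b ha hb hab
    refine ⟨(hx.1.const_smul a).add (hy.1.const_smul b), ?_⟩
    filter_upwards [hx.2, hy.2] with ω h1 h2
    have : (0:ℝ) ≤ a * x ω + b * y ω := by
      have := mul_nonneg ha h1; have := mul_nonneg hb h2; linarith
    simpa [smul_eq_mul] using this
  exact convexHull_min hS hconv hv

lemma convexHull_mem_lb {Ω : Type*} {S : Set (Ω → ℝ)} {c : Ω → ENNReal}
    (hS : ∀ u ∈ S, ∀ ω, c ω ≤ ENNReal.ofReal (u ω))
    {v : Ω → ℝ} (hv : v ∈ convexHull ℝ S) : ∀ ω, c ω ≤ ENNReal.ofReal (v ω) := by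
  have hconv : Convex ℝ {u : Ω → ℝ | ∀ ω, c ω ≤ ENNReal.ofReal (u ω)} := by
    intro x hx y hy a b ha hb hab ω
    have h1 : min (x ω) (y ω) ≤ a * x ω + b * y ω := by
      rcases le_total (x ω) (y ω) with h | h
      · rw [min_eq_left h]
        have e : a * x ω + b * y ω - x ω = b * (y ω - x ω) + (a + b - 1) * x ω := by ring
        rw [hab] at e
        simp only [sub_self, zero_mul, add_zero] at e
        linarith [mul_nonneg hb (sub_nonneg.2 h)]
      · rw [min_eq_right h]
        have e : a * x ω + b * y ω - y ω = a * (x ω - y ω) + (a + b - 1) * y ω := by ring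
        rw [hab] at e
        simp only [sub_self, zero_mul, add_zero] at e
        linarith [mul_nonneg ha (sub_nonneg.2 h)]
    have h2 : c ω ≤ ENNReal.ofReal (min (x ω) (y ω)) := by
      rcases le_total (x ω) (y ω) with h | h
      · rw [min_eq_left h]; exact hx ω
      · rw [min_eq_right h]; exact hy ω
    calc c ω ≤ ENNReal.ofReal (min (x ω) (y ω)) := h2
      _ ≤ ENNReal.ofReal (a * x ω + b * y ω) := ENNReal.ofReal_le_ofReal h1
      _ = ENNReal.ofReal ((a • x + b • y) ω) := by simp [smul_eq_mul]
  exact convexHull_min hS hconv hv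

lemma integrable_of_mem_Icc {Ω : Type*} [MeasurableSpace Ω] (P : Measure Ω) [IsFiniteMeasure P]
    {X : Ω → ℝ} (hm : Measurable X) (hb : ∀ ω, X ω ∈ Icc (0:ℝ) 1) : Integrable X P :=
  Integrable.mono' (integrable_const 1) hm.aestronglyMeasurable
    (ae_of_all _ fun ω => by
      rw [Real.norm_eq_abs, abs_of_nonneg (hb ω).1]; exact (hb ω).2)

lemma phiE_gain {α : ℝ} (hα : 0 < α) : ∃ δ > 0, ∀ x y : ENNReal,
    α ≤ |phiE x - phiE y| → (phiE x + phiE y) / 2 + δ ≤ phiE ((x + y) / 2) := by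
  classical
  set G : ENNReal × ENNReal → ℝ :=
    fun p => phiE ((p.1 + p.2) / 2) - (phiE p.1 + phiE p.2) / 2 with hGdef
  set K : Set (ENNReal × ENNReal) := {p | α ≤ |phiE p.1 - phiE p.2|} with hKdef
  by_cases hK : K.Nonempty
  · have hKc : IsClosed K := by
      have hcont : Continuous fun p : ENNReal × ENNReal => |phiE p.1 - phiE p.2| :=
        ((phiE_cont.comp continuous_fst).sub (phiE_cont.comp continuous_snd)).abs
      exact isClosed_le continuous_const hcont
    have hGc : Continuous G := by
      apply Continuous.sub
      · exact phiE_cont.comp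
          ((ENNReal.continuous_div_const 2 (by norm_num)).comp
            (continuous_fst.add continuous_snd))
      · exact ((phiE_cont.comp continuous_fst).add (phiE_cont.comp continuous_snd)).div_const 2
    obtain ⟨p0, hp0, hmin⟩ := hKc.isCompact.exists_isMinOn hK hGc.continuousOn
    have hδ : 0 < G p0 := by
      have hne : p0.1 ≠ p0.2 := by
        intro h
        have := hp0
        rw [hKdef] at this
        simp only [mem_setOf_eq, h, sub_self, abs_zero] at this
        linarith
      have := phiE_midpoint_strict hne
      simp only [hGdef]
      linarith
    refine ⟨G p0, hδ, fun x y hxy => ?_⟩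
    have hmem : (x, y) ∈ K := hxy
    have := hmin hmem
    simp only [hGdef] at this ⊢
    have h2 : G p0 ≤ G (x, y) := this
    simp only [hGdef] at h2
    linarith
  · refine ⟨1, one_pos, fun x y hxy => absurd ⟨(x, y), hxy⟩ hK⟩

lemma komlos {Ω : Type*} [MeasurableSpace Ω] (P : Measure Ω) [IsProbabilityMeasure P]
    (w : ℕ → Ω → ℝ) (hw : ∀ n, Measurable (w n) ∧ 0 ≤ᵐ[P] w n) :
    ∃ (v : ℕ → Ω → ℝ) (h : Ω → ENNReal), Measurable h ∧
      (∀ n, v n ∈ convexHull ℝ {u : Ω → ℝ | ∃ k, n ≤ k ∧ u = w k}) ∧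
      (∀ᵐ ω ∂P, Tendsto (fun n => ENNReal.ofReal (v n ω)) atTop (nhds (h ω))) ∧
      (∀ ω, liminf (fun n => ENNReal.ofReal (w n ω)) atTop ≤ h ω) := by
  classical
  set T : ℕ → Set (Ω → ℝ) := fun n => convexHull ℝ {u : Ω → ℝ | ∃ k, n ≤ k ∧ u = w k} with hT
  have hTanti : ∀ {m n : ℕ}, n ≤ m → T m ⊆ T n := fun {m n} hnm =>
    convexHull_mono (fun u hu => by obtain ⟨k, hk, h2⟩ := hu; exact ⟨k, le_trans hnm hk, h2⟩)
  have hwT : ∀ n, w n ∈ T n := fun n => subset_convexHull ℝ _ ⟨n, le_rfl, rfl⟩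
  have hTm : ∀ n, ∀ v ∈ T n, Measurable v ∧ 0 ≤ᵐ[P] v := fun n v hv =>
    convexHull_mem_meas_nonneg (fun u hu => by obtain ⟨k, _, rfl⟩ := hu; exact hw k) hv
  set X : (Ω → ℝ) → Ω → ℝ := fun v ω => phiE (ENNReal.ofReal (v ω)) with hX
  have hXmem : ∀ v ω, X v ω ∈ Icc (0:ℝ) 1 := fun v ω => phiE_mem _
  have hXmeas : ∀ v : Ω → ℝ, Measurable v → Measurable (X v) := fun v hv =>
    phiE_cont.measurable.comp (ENNReal.measurable_ofReal.comp hv)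
  have hXint : ∀ v : Ω → ℝ, Measurable v → Integrable (X v) P := fun v hv =>
    integrable_of_mem_Icc P (hXmeas v hv) (hXmem v)
  set Ψ : (Ω → ℝ) → ℝ := fun v => ∫ ω, X v ω ∂P with hΨ
  have hΨle : ∀ v : Ω → ℝ, Measurable v → Ψ v ≤ 1 := by
    intro v hv
    have h1 : Ψ v ≤ ∫ _ω, (1:ℝ) ∂P :=
      integral_mono_ae (hXint v hv) (integrable_const 1) (ae_of_all _ fun ω => (hXmem v ω).2)
    simpa using h1
  have hΨnn : ∀ v : Ω → ℝ, 0 ≤ Ψ v := fun v => integral_nonneg fun ω => (hXmem v ω).1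
  set SS : ℕ → ℝ := fun n => sSup (Ψ '' T n) with hSS
  have hIm : ∀ n, (Ψ '' T n).Nonempty := fun n => ⟨_, mem_image_of_mem Ψ (hwT n)⟩
  have hBdd : ∀ n, BddAbove (Ψ '' T n) := fun n =>
    ⟨1, fun y hy => by obtain ⟨u, hu, rfl⟩ := hy; exact hΨle u (hTm n u hu).1⟩
  have hSSanti : Antitone SS := fun n m hnm =>
    csSup_le_csSup (hBdd n) (hIm m) (image_mono (f := Ψ) (hTanti hnm))
  have hSSlb : ∀ n, 0 ≤ SS n := fun n =>
    le_trans (hΨnn (w n)) (le_csSup (hBdd n) (mem_image_of_mem Ψ (hwT n)))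
  set s : ℝ := ⨅ n, SS n with hs
  have hBddBelow : BddBelow (Set.range SS) := ⟨0, fun y hy => by obtain ⟨n, rfl⟩ := hy; exact hSSlb n⟩
  have hsle : ∀ n, s ≤ SS n := fun n => ciInf_le hBddBelow n
  have hSStend : Tendsto SS atTop (nhds s) := tendsto_atTop_ciInf hSSanti hBddBelow
  have hchoice : ∀ n : ℕ, ∃ u ∈ T n, SS n - 1/(n+1) < Ψ u := by
    intro n
    have hlt : SS n - 1/((n:ℝ)+1) < SS n := by
      have : (0:ℝ) < 1/((n:ℝ)+1) := by positivity
      linarith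
    obtain ⟨y, hy, hlty⟩ := exists_lt_of_lt_csSup (hIm n) hlt
    obtain ⟨u, hu, rfl⟩ := hy
    exact ⟨u, hu, hlty⟩
  choose v hvT hvΨ using hchoice
  have hvmeas : ∀ n, Measurable (v n) := fun n => (hTm n _ (hvT n)).1
  have hvnn : ∀ n, 0 ≤ᵐ[P] v n := fun n => (hTm n _ (hvT n)).2
  -- key estimate: near-Cauchyness in measure
  have key : ∀ α : ℝ, 0 < α → ∃ N : ℕ, ∀ m n, N ≤ m → N ≤ n →
      P {ω | α ≤ |X (v n) ω - X (v m) ω|} ≤ ENNReal.ofReal α := by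
    intro α hα
    obtain ⟨δ, hδ, hgain⟩ := phiE_gain hα
    have h1 : ∀ᶠ n in atTop, SS n < s + δ*α/4 :=
      hSStend.eventually_lt_const (by nlinarith)
    have h2 : ∀ᶠ n : ℕ in atTop, 1/((n:ℝ)+1) < δ*α/4 :=
      tendsto_one_div_add_atTop_nhds_zero_nat.eventually_lt_const (by positivity)
    obtain ⟨N, hN⟩ := eventually_atTop.1 (h1.and h2)
    refine ⟨N, fun m n hm hn => ?_⟩
    set A := {ω | α ≤ |X (v n) ω - X (v m) ω|} with hA
    have hAmeas : MeasurableSet A :=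
      measurableSet_le measurable_const ((hXmeas _ (hvmeas n)).sub (hXmeas _ (hvmeas m))).abs
    set u : Ω → ℝ := fun ω => (v n ω + v m ω)/2 with hu
    have humeas : Measurable u := ((hvmeas n).add (hvmeas m)).div_const 2
    have huT : u ∈ T N := by
      have hcomb := (convex_convexHull ℝ {u : Ω → ℝ | ∃ k, N ≤ k ∧ u = w k})
        (hTanti hn (hvT n)) (hTanti hm (hvT m))
        (by norm_num : (0:ℝ) ≤ 1/2) (by norm_num : (0:ℝ) ≤ 1/2) (by norm_num)
      have : (1/2 : ℝ) • v n + (1/2 : ℝ) • v m = u := by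
        funext ω; simp only [Pi.add_apply, Pi.smul_apply, smul_eq_mul, hu]; ring
      rwa [this] at hcomb
    have hintn := hXint _ (hvmeas n)
    have hintm := hXint _ (hvmeas m)
    have hintu := hXint u humeas
    have hpt : ∀ᵐ ω ∂P,
        (X (v n) ω + X (v m) ω)/2 + δ * A.indicator (fun _ => (1:ℝ)) ω ≤ X u ω := by
      filter_upwards [hvnn n, hvnn m] with ω h1' h2'
      have hof : ENNReal.ofReal (u ω) =
          (ENNReal.ofReal (v n ω) + ENNReal.ofReal (v m ω))/2 := by
        rw [show u ω = (v n ω + v m ω)/2 from rfl, ENNReal.ofReal_div_of_pos (by norm_num),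
          ENNReal.ofReal_add h1' h2']
        norm_num
      by_cases hωA : ω ∈ A
      · have hg := hgain (ENNReal.ofReal (v n ω)) (ENNReal.ofReal (v m ω)) hωA
        rw [indicator_of_mem hωA]
        show (X (v n) ω + X (v m) ω)/2 + δ * 1 ≤ phiE (ENNReal.ofReal (u ω))
        rw [hof]
        simpa using hg
      · rw [indicator_of_notMem hωA]
        have hg := phiE_midpoint_le (ENNReal.ofReal (v n ω)) (ENNReal.ofReal (v m ω))
        show (X (v n) ω + X (v m) ω)/2 + δ * 0 ≤ phiE (ENNReal.ofReal (u ω))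
        rw [hof]
        simpa using hg
    have hind : Integrable (fun ω => δ * A.indicator (fun _ => (1:ℝ)) ω) P :=
      (((integrable_const (1:ℝ)).indicator hAmeas).const_mul δ)
    have hL : Integrable (fun ω =>
        (X (v n) ω + X (v m) ω)/2 + δ * A.indicator (fun _ => (1:ℝ)) ω) P :=
      ((hintn.add hintm).div_const 2).add hind
    have hmono := integral_mono_ae hL hintu hpt
    have hLint : Integrable (fun ω => (X (v n) ω + X (v m) ω)/2) P :=
      (hintn.add hintm).div_const 2
    have e1 : ∫ ω, ((X (v n) ω + X (v m) ω)/2 + δ * A.indicator (fun _ => (1:ℝ)) ω) ∂P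
        = (∫ ω, (X (v n) ω + X (v m) ω)/2 ∂P) + ∫ ω, δ * A.indicator (fun _ => (1:ℝ)) ω ∂P :=
      integral_add hLint hind
    have e2 : ∫ ω, (X (v n) ω + X (v m) ω)/2 ∂P = (Ψ (v n) + Ψ (v m))/2 := by
      rw [integral_div]
      congr 1
      exact integral_add hintn hintm
    have e3 : ∫ ω, δ * A.indicator (fun _ => (1:ℝ)) ω ∂P = δ * (P A).toReal := by
      rw [integral_const_mul]
      congr 1
      rw [integral_indicator_const _ hAmeas]
      simp [measureReal_def]
    rw [e1, e2, e3] at hmono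
    have hub : Ψ u ≤ SS N := le_csSup (hBdd N) (mem_image_of_mem Ψ huT)
    have hn1 := (hN n hn).2
    have hm1 := (hN m hm).2
    have hN1 := (hN N le_rfl).1
    have hvn := hvΨ n
    have hvm := hvΨ m
    have hsn := hsle n
    have hsm := hsle m
    have hSNn : s ≤ SS N := hsle N
    have htoReal : (P A).toReal ≤ α := by nlinarith
    rw [← ENNReal.ofReal_toReal (measure_ne_top P A)]
    exact ENNReal.ofReal_le_ofReal htoReal
  have key2 : ∀ j : ℕ, ∃ N : ℕ, ∀ m n, N ≤ m → N ≤ n →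
      P {ω | (1/2:ℝ)^j ≤ |X (v n) ω - X (v m) ω|} ≤ ENNReal.ofReal ((1/2)^j) :=
    fun j => key _ (by positivity)
  choose N hNp using key2
  set nn : ℕ → ℕ := fun j => Nat.rec (N 0) (fun j ih => max (N (j+1)) (ih + 1)) j with hnn
  have hnn0 : ∀ j, N j ≤ nn j := by
    intro j
    cases j with
    | zero => exact le_rfl
    | succ j => exact le_max_left _ _
  have hnnsucc : ∀ j, nn j + 1 ≤ nn (j+1) := fun j => le_max_right _ _
  have hnnmono : StrictMono nn :=
    strictMono_nat_of_lt_succ fun j => lt_of_lt_of_le (Nat.lt_succ_self _) (hnnsucc j)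
  set A : ℕ → Set Ω :=
    fun j => {ω | (1/2:ℝ)^j ≤ |X (v (nn (j+1))) ω - X (v (nn j)) ω|} with hAdef
  have hAbound : ∀ j, P (A j) ≤ ENNReal.ofReal ((1/2)^j) := fun j =>
    hNp j (nn j) (nn (j+1)) (hnn0 j)
      (le_trans (hnn0 j) (le_trans (Nat.le_succ _) (hnnsucc j)))
  have hsum : ∑' j, P (A j) ≠ ⊤ := by
    have hle : ∑' j, P (A j) ≤ ∑' j : ℕ, ENNReal.ofReal ((1/2:ℝ)^j) :=
      ENNReal.tsum_le_tsum hAbound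
    have h2 : ∑' j : ℕ, ENNReal.ofReal ((1/2:ℝ)^j) = ENNReal.ofReal 2 := by
      rw [← ENNReal.ofReal_tsum_of_nonneg (fun j => by positivity) summable_geometric_two]
      congr 1
      exact tsum_geometric_two
    exact ne_top_of_le_ne_top (by rw [h2]; exact ENNReal.ofReal_ne_top) hle
  have hBC := MeasureTheory.ae_eventually_notMem hsum
  set Y : ℕ → Ω → ENNReal := fun j ω => ENNReal.ofReal (v (nn j) ω) with hY
  set h : Ω → ENNReal := fun ω => ⨅ m, ⨆ j, Y (j + m) ω with hh
  have hmeas : Measurable h :=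
    Measurable.iInf fun m => Measurable.iSup fun j =>
      ENNReal.measurable_ofReal.comp (hvmeas _)
  have hlimsup : ∀ ω, h ω = limsup (fun j => Y j ω) atTop := by
    intro ω
    show (⨅ m, ⨆ j, Y (j + m) ω) = _
    exact (limsup_eq_iInf_iSup_of_nat' (u := fun j => Y j ω)).symm
  have haetend : ∀ᵐ ω ∂P, Tendsto (fun j => Y j ω) atTop (nhds (h ω)) := by
    filter_upwards [hBC] with ω hω
    obtain ⟨J, hJ⟩ := eventually_atTop.1 hω
    have hsummable : Summable (fun j => dist (X (v (nn j)) ω) (X (v (nn (j+1))) ω)) := by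
      rw [← summable_nat_add_iff J]
      have hgeo : Summable (fun j : ℕ => (1/2:ℝ)^(j + J)) := by
        simp_rw [pow_add]
        exact summable_geometric_two.mul_right _
      refine Summable.of_nonneg_of_le (fun j => dist_nonneg) (fun j => ?_) hgeo
      have hnot := hJ (j + J) (Nat.le_add_left _ _)
      rw [hAdef, mem_setOf_eq, not_le] at hnot
      rw [Real.dist_eq, abs_sub_comm]
      exact le_of_lt hnot
    have hcauchy : CauchySeq (fun j => X (v (nn j)) ω) := cauchySeq_of_summable_dist hsummable
    obtain ⟨l, hl⟩ := cauchySeq_tendsto_of_complete hcauchy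
    obtain ⟨c, hc⟩ := phiE_tendsto_transfer (z := fun j => Y j ω) hl
    have hhc : h ω = c := by rw [hlimsup ω]; exact hc.limsup_eq
    rw [hhc]; exact hc
  have hlow : ∀ ω, liminf (fun n => ENNReal.ofReal (w n ω)) atTop ≤ h ω := by
    intro ω
    rw [liminf_eq_iSup_iInf_of_nat]
    refine iSup_le fun m => ?_
    rw [hlimsup ω]
    have hptlb : ∀ j, m ≤ j → (⨅ k, ⨅ _ : m ≤ k, ENNReal.ofReal (w k ω)) ≤ Y j ω := by
      intro j hj
      refine convexHull_mem_lb (c := fun ω' => ⨅ k, ⨅ _ : m ≤ k, ENNReal.ofReal (w k ω'))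
        ?_ (hvT (nn j)) ω
      rintro u' ⟨k, hk, rfl⟩ ω'
      exact iInf₂_le k (le_trans hj (le_trans hnnmono.le_apply hk))
    refine le_limsup_of_frequently_le ?_
    exact (eventually_atTop.2 ⟨m, hptlb⟩).frequently
  refine ⟨fun j => v (nn j), h, hmeas, fun j => hTanti hnnmono.le_apply (hvT (nn j)), haetend, hlow⟩

lemma tendsto_measure_zero_of_ae_eventually {Ω : Type*} [MeasurableSpace Ω] {P : Measure Ω}
    [IsFiniteMeasure P] {A : ℕ → Set Ω} (hA : ∀ j, MeasurableSet (A j))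
    (h : ∀ᵐ ω ∂P, ∀ᶠ j in atTop, ω ∉ A j) :
    Tendsto (fun j => P (A j)) atTop (nhds 0) := by
  set B : ℕ → Set Ω := fun j => ⋃ i, ⋃ _ : j ≤ i, A i with hB
  have hBmeas : ∀ j, MeasurableSet (B j) := fun j =>
    MeasurableSet.iUnion fun i => MeasurableSet.iUnion fun _ => hA i
  have hBanti : Antitone B := fun j k hjk =>
    iUnion₂_subset fun i hik => subset_iUnion₂ (s := fun i _ => A i) i (hjk.trans hik)
  have hInull : P (⋂ j, B j) = 0 := by
    have hsub : ⋂ j, B j ⊆ {ω | ¬ ∀ᶠ j in atTop, ω ∉ A j} := by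
      intro ω hω
      simp only [mem_iInter, hB, mem_iUnion] at hω
      rw [mem_setOf_eq, Filter.not_eventually]
      rw [frequently_atTop]
      intro a
      obtain ⟨i, hi, hmem⟩ := hω a
      exact ⟨i, hi, not_not_intro hmem⟩
    exact measure_mono_null hsub (ae_iff.mp h)
  have htend := tendsto_measure_iInter_atTop (μ := P)
    (fun j => (hBmeas j).nullMeasurableSet) hBanti ⟨0, measure_ne_top P _⟩
  rw [hInull] at htend
  have hle : ∀ j, P (A j) ≤ P (B j) := fun j =>
    measure_mono (subset_iUnion₂ (s := fun i _ => A i) j le_rfl)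
  exact tendsto_of_tendsto_of_tendsto_of_le_of_le tendsto_const_nhds htend
    (fun j => zero_le) hle

theorem stmt15 {Ω : Type*} [MeasurableSpace Ω] (P : Measure Ω)
    [IsProbabilityMeasure P]
    (f : ℕ → Ω → ℝ)
    (hfmeas : ∀ n, Measurable (f n)) (hfnn : ∀ n, 0 ≤ᵐ[P] f n)
    (g : Ω → ENNReal) (hgmeas : Measurable g)
    (hg : ∀ n, g ∈ SolidHull P (LimitsOfConvexTail P f n)) :
    ∃ h : Ω → ENNReal, (∀ n, h ∈ LimitsOfConvexTail P f n) ∧ g ≤ᵐ[P] h := by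
  classical
  have hdata : ∀ n, ∃ hn : Ω → ENNReal, (hn ∈ LimitsOfConvexTail P f n) ∧ g ≤ᵐ[P] hn := by
    intro n
    obtain ⟨-, hn, hmem, hle⟩ := hg n
    exact ⟨hn, hmem, hle⟩
  choose H hHmem hgH using hdata
  have hHu : ∀ n, ∃ u : ℕ → Ω → ℝ,
      (∀ j, u j ∈ convexHull ℝ {u' : Ω → ℝ | ∃ k, n ≤ k ∧ u' = f k}) ∧
      ∀ᵐ ω ∂P, Tendsto (fun j => ENNReal.ofReal (u j ω)) atTop (nhds (H n ω)) :=
    fun n => (hHmem n).2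
  choose u humem hutend using hHu
  have hhullmn : ∀ n, ∀ v ∈ convexHull ℝ {u' : Ω → ℝ | ∃ k, n ≤ k ∧ u' = f k},
      Measurable v ∧ 0 ≤ᵐ[P] v := fun n v hv =>
    convexHull_mem_meas_nonneg
      (fun u' hu' => by obtain ⟨k, _, rfl⟩ := hu'; exact ⟨hfmeas k, hfnn k⟩) hv
  set τ : ℕ → Ω → ENNReal := fun n ω => min (g ω) n - ((n:ENNReal)+1)⁻¹ with hτ
  have hτmeas : ∀ n, Measurable (τ n) := fun n =>
    (hgmeas.min measurable_const).sub measurable_const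
  set A : ℕ → ℕ → Set Ω := fun n j => {ω | ENNReal.ofReal (u n j ω) < τ n ω} with hA
  have hAmeas : ∀ n j, MeasurableSet (A n j) := fun n j =>
    measurableSet_lt (ENNReal.measurable_ofReal.comp (hhullmn n _ (humem n j)).1) (hτmeas n)
  have hAev : ∀ n, ∀ᵐ ω ∂P, ∀ᶠ j in atTop, ω ∉ A n j := by
    intro n
    filter_upwards [hutend n, hgH n] with ω hconv hle
    rcases eq_or_ne (τ n ω) 0 with h0 | h0
    · refine Eventually.of_forall fun j => ?_
      simp only [hA, mem_setOf_eq, h0, not_lt]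
      exact zero_le
    · have hmin0 : min (g ω) (n:ENNReal) ≠ 0 := by
        intro hc
        apply h0
        simp only [hτ, hc, zero_tsub]
      have hτlt : τ n ω < H n ω := by
        have h1 : τ n ω < min (g ω) n := by
          refine ENNReal.sub_lt_self ?_ hmin0 ?_
          · exact ne_top_of_le_ne_top (ENNReal.natCast_ne_top n) (min_le_right _ _)
          · simp
        exact lt_of_lt_of_le h1 (le_trans (min_le_left _ _) hle)
      have hev := hconv.eventually_const_lt hτlt
      filter_upwards [hev] with j hj
      simp only [hA, mem_setOf_eq, not_lt]
      exact le_of_lt hj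
  have hAtend : ∀ n, Tendsto (fun j => P (A n j)) atTop (nhds 0) := fun n =>
    tendsto_measure_zero_of_ae_eventually (hAmeas n) (hAev n)
  have hjpick : ∀ n, ∃ j, P (A n j) ≤ ENNReal.ofReal ((1/2:ℝ)^n) := by
    intro n
    have hev := (hAtend n).eventually_lt_const
      (show (0:ENNReal) < ENNReal.ofReal ((1/2:ℝ)^n) by
        rw [ENNReal.ofReal_pos]; positivity)
    obtain ⟨j, hj⟩ := hev.exists
    exact ⟨j, le_of_lt hj⟩
  choose jj hjj using hjpick
  set W : ℕ → Ω → ℝ := fun n => u n (jj n) with hW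
  have hWmem : ∀ n, W n ∈ convexHull ℝ {u' : Ω → ℝ | ∃ k, n ≤ k ∧ u' = f k} :=
    fun n => humem n (jj n)
  have hWm : ∀ n, Measurable (W n) ∧ 0 ≤ᵐ[P] W n := fun n => hhullmn n _ (hWmem n)
  have hsum : ∑' n, P (A n (jj n)) ≠ ⊤ := by
    have hle : ∑' n, P (A n (jj n)) ≤ ∑' n : ℕ, ENNReal.ofReal ((1/2:ℝ)^n) :=
      ENNReal.tsum_le_tsum hjj
    have h2 : ∑' n : ℕ, ENNReal.ofReal ((1/2:ℝ)^n) = ENNReal.ofReal 2 := by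
      rw [← ENNReal.ofReal_tsum_of_nonneg (fun j => by positivity) summable_geometric_two]
      congr 1
      exact tsum_geometric_two
    exact ne_top_of_le_ne_top (by rw [h2]; exact ENNReal.ofReal_ne_top) hle
  have hBC := MeasureTheory.ae_eventually_notMem hsum
  have hglim : ∀ᵐ ω ∂P, g ω ≤ liminf (fun n => ENNReal.ofReal (W n ω)) atTop := by
    filter_upwards [hBC] with ω hω
    have hev : ∀ᶠ n in atTop, τ n ω ≤ ENNReal.ofReal (W n ω) := by
      filter_upwards [hω] with n hn
      simp only [hA, mem_setOf_eq, not_lt] at hn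
      exact hn
    have hτtend : Tendsto (fun n => τ n ω) atTop (nhds (g ω)) := by
      have hmin : Tendsto (fun n : ℕ => min (g ω) (n:ENNReal)) atTop (nhds (g ω)) := by
        have := tendsto_const_nhds (x := g ω) (f := atTop (α := ℕ))
        have hm := this.min ENNReal.tendsto_nat_nhds_top
        rwa [min_eq_left le_top] at hm
      have hinv : Tendsto (fun n : ℕ => ((n:ENNReal)+1)⁻¹) atTop (nhds 0) := by
        have h1 : Tendsto (fun n : ℕ => ((n:ENNReal)+1)) atTop (nhds ⊤) :=
          tendsto_nhds_top_mono ENNReal.tendsto_nat_nhds_top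
            (Eventually.of_forall fun n => le_add_right le_rfl)
        have h2 := ENNReal.tendsto_inv_iff.2 h1
        simpa using h2
      have hsub := ENNReal.Tendsto.sub hmin hinv (Or.inr (by simp))
      simpa using hsub
    calc g ω = liminf (fun n => τ n ω) atTop := (hτtend.liminf_eq).symm
      _ ≤ liminf (fun n => ENNReal.ofReal (W n ω)) atTop := liminf_le_liminf hev
  obtain ⟨v, h, hmeas, hvmem, hvtend, hlow⟩ := komlos P W hWm
  have hvmemf : ∀ j, v j ∈ convexHull ℝ {u' : Ω → ℝ | ∃ k, j ≤ k ∧ u' = f k} := by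
    intro j
    have hsub : convexHull ℝ {u' : Ω → ℝ | ∃ k, j ≤ k ∧ u' = W k} ⊆
        convexHull ℝ {u' : Ω → ℝ | ∃ k, j ≤ k ∧ u' = f k} := by
      apply convexHull_min ?_ (convex_convexHull ℝ _)
      rintro u' ⟨k, hk, rfl⟩
      refine convexHull_mono ?_ (hWmem k)
      rintro x ⟨k', hk', hx⟩
      exact ⟨k', le_trans hk hk', hx⟩
    exact hsub (hvmem j)
  refine ⟨h, fun n => ⟨hmeas, fun j => v (j + n), fun j => ?_, ?_⟩, ?_⟩
  · refine convexHull_mono ?_ (hvmemf (j + n))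
    rintro x ⟨k, hk, hx⟩
    exact ⟨k, le_trans (Nat.le_add_left n j) hk, hx⟩
  · filter_upwards [hvtend] with ω hω
    exact hω.comp (tendsto_add_atTop_nat n)
  · filter_upwards [hglim] with ω hω
    exact le_trans hω (hlow ω)
end

section
/- Let (Ω, 𝓕, P) be a probability space and let S be a nonempty set of nonnegative a.e.-finite measurable functions that is convex, solid (if h ∈ S, g is measurable and 0 ≤ g ≤ h a.e., then g ∈ S), bounded in probability, and closed under convergence in probability. Then there exists a probability measure Q equivalent to P such that sup_{h∈S} E_Q[h] < ∞. -/
open MeasureTheory Filter Set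
open scoped ENNReal NNReal

set_option maxHeartbeats 1000000 in
private lemma yan_sep {Ω : Type*} [MeasurableSpace Ω] (P : Measure Ω)
    [IsProbabilityMeasure P]
    (C : Set (Ω → ℝ)) (hC0 : (0 : Ω → ℝ) ∈ C) (hCconv : Convex ℝ C)
    (hC2 : ∀ g ∈ C, MemLp g 2 P)
    (hbdd : ∀ ε : ℝ≥0∞, 0 < ε → ∃ ℓ : ℝ, ∀ g ∈ C, P {ω | ℓ < g ω} ≤ ε)
    {A : Set Ω} (hA : MeasurableSet A) (hApos : 0 < P A) :
    ∃ Z : Ω → ℝ, Measurable Z ∧ (∀ ω, 0 ≤ Z ω) ∧ eLpNorm Z 2 P ≤ 1 ∧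
      (∀ g ∈ C, ∫ ω, Z ω * g ω ∂P ≤ 1) ∧ 0 < P (A ∩ {ω | 0 < Z ω}) := by
  classical
  set D : Set (Lp ℝ 2 P) := {x | ∃ g ∈ C, (⇑x : Ω → ℝ) ≤ᵐ[P] g} with hDdef
  have h0D : (0 : Lp ℝ 2 P) ∈ D := by
    refine ⟨0, hC0, ?_⟩
    filter_upwards [Lp.coeFn_zero ℝ 2 P] with ω h
    simp [h]
  have hDconv : Convex ℝ D := by
    rintro x ⟨g₁, hg₁, hx⟩ y ⟨g₂, hg₂, hy⟩ a b ha hb hab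
    refine ⟨a • g₁ + b • g₂, hCconv hg₁ hg₂ ha hb hab, ?_⟩
    filter_upwards [Lp.coeFn_add (a • x) (b • y), Lp.coeFn_smul a x, Lp.coeFn_smul b y, hx, hy]
      with ω h1 h2 h3 h4 h5
    have : (⇑(a • x + b • y)) ω = a * (⇑x) ω + b * (⇑y) ω := by
      rw [h1]; simp [h2, h3]
    rw [this]
    simp only [Pi.add_apply, Pi.smul_apply, smul_eq_mul]
    exact add_le_add (mul_le_mul_of_nonneg_left h4 ha) (mul_le_mul_of_nonneg_left h5 hb)
  have hAne : P A ≠ ⊤ := measure_ne_top P A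
  set I : Lp ℝ 2 P := indicatorConstLp 2 hA hAne (1 : ℝ) with hIdef
  have hnotin : ∃ c : ℝ, 0 < c ∧ c • I ∉ closure D := by
    by_contra hcon
    push_neg at hcon
    set κ : ℝ≥0∞ := P A / 2 / 2 with hκ
    have hκ0 : 0 < κ := ENNReal.half_pos (ENNReal.half_pos hApos.ne').ne'
    have hκtop : κ ≠ ⊤ := by
      intro h
      apply hAne
      simpa [hκ, ENNReal.div_eq_top] using h
    obtain ⟨ℓ, hℓ⟩ := hbdd κ hκ0
    set c : ℝ := max (2 * ℓ + 2) 2 with hcdef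
    have hc0 : (0:ℝ) < c := lt_of_lt_of_le (by norm_num) (le_max_right _ _)
    have hcℓ : ℓ < c / 2 := by
      have h1 : 2*ℓ + 2 ≤ c := le_max_left _ _
      linarith
    have hκt : 0 < κ.toReal := ENNReal.toReal_pos hκ0.ne' hκtop
    set η : ℝ := min 1 (Real.sqrt (κ.toReal / 2)) with hηdef
    have hη0 : 0 < η := lt_min one_pos (Real.sqrt_pos.2 (by linarith))
    have hη2 : ENNReal.ofReal (η ^ 2) < κ := by
      rw [ENNReal.ofReal_lt_iff_lt_toReal (by positivity) hκtop]
      have h1 : η ≤ Real.sqrt (κ.toReal / 2) := min_le_right _ _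
      have h2 : Real.sqrt (κ.toReal / 2) ^ 2 = κ.toReal / 2 :=
        Real.sq_sqrt (by linarith)
      nlinarith [Real.sqrt_nonneg (κ.toReal / 2)]
    obtain ⟨x, hxD, hdist⟩ :=
      Metric.mem_closure_iff.1 (hcon c hc0) ((c/2) * η) (by positivity)
    obtain ⟨g, hgC, hxg⟩ := hxD
    set B : Set Ω := {ω | ENNReal.ofReal (c/2) ≤ (‖(⇑(x - c • I)) ω‖₊ : ℝ≥0∞)} with hBdef
    have hsn : eLpNorm (⇑(x - c • I)) 2 P < ENNReal.ofReal (c/2 * η) := by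
      rw [← ENNReal.ofReal_toReal (Lp.eLpNorm_ne_top (x - c • I)), ← Lp.norm_def]
      apply (ENNReal.ofReal_lt_ofReal_iff (by positivity)).2
      have : ‖x - c • I‖ = dist (c • I) x := by rw [dist_eq_norm, norm_sub_rev]
      rw [this]; exact hdist
    have hPB : P B < κ := by
      have hcheb := meas_ge_le_mul_pow_eLpNorm_enorm P (p := 2) two_ne_zero ENNReal.ofNat_ne_top
        (Lp.aestronglyMeasurable (x - c • I))
        (ε := ENNReal.ofReal (c/2)) (ENNReal.ofReal_pos.2 (by positivity)).ne'
        (fun h => absurd h ENNReal.ofReal_ne_top)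
      have htr : ((2:ℝ≥0∞)).toReal = (2:ℝ) := by simp
      rw [htr] at hcheb
      refine lt_of_le_of_lt (le_trans hcheb ?_) hη2
      have hle : eLpNorm (⇑(x - c • I)) 2 P ≤ ENNReal.ofReal (c/2 * η) := hsn.le
      calc (ENNReal.ofReal (c/2))⁻¹ ^ (2:ℝ) * eLpNorm (⇑(x - c • I)) 2 P ^ (2:ℝ)
          ≤ (ENNReal.ofReal (c/2))⁻¹ ^ (2:ℝ) * ENNReal.ofReal (c/2 * η) ^ (2:ℝ) := by
            gcongr
        _ = ((ENNReal.ofReal (c/2))⁻¹ * ENNReal.ofReal (c/2 * η)) ^ (2:ℝ) := by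
            rw [ENNReal.mul_rpow_of_nonneg _ _ (by norm_num)]
        _ = (ENNReal.ofReal η) ^ (2:ℝ) := by
            congr 1
            rw [← ENNReal.div_eq_inv_mul, ← ENNReal.ofReal_div_of_pos (by positivity)]
            congr 1
            field_simp
        _ = ENNReal.ofReal (η ^ 2) := by
            rw [show ((2:ℝ)) = ((2:ℕ):ℝ) by norm_num, ENNReal.rpow_natCast,
              ← ENNReal.ofReal_pow hη0.le]
    have hPdiff : P (A \ B) ≤ P {ω | ℓ < g ω} := by
      apply measure_mono_ae
      filter_upwards [Lp.coeFn_sub x (c • I), Lp.coeFn_smul c I,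
        indicatorConstLp_coeFn (p := 2) (hs := hA) (hμs := hAne) (c := (1:ℝ)), hxg]
        with ω h1 h2 h3 h4 hω
      obtain ⟨hωA, hωB⟩ := hω
      have hIω : (⇑I) ω = 1 := by
        rw [h3]; simp [Set.indicator_of_mem hωA]
      have hval : (⇑(x - c • I)) ω = (⇑x) ω - c := by
        rw [h1]; simp [h2, hIω]
      have hnorm : ‖(⇑(x - c • I)) ω‖ < c / 2 := by
        by_contra hcon2
        push_neg at hcon2
        apply hωB
        show ENNReal.ofReal (c/2) ≤ ‖(⇑(x - c • I)) ω‖ₑ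
        rw [← ofReal_norm]
        exact ENNReal.ofReal_le_ofReal hcon2
      rw [hval, Real.norm_eq_abs, abs_lt] at hnorm
      show ℓ < g ω
      have : c / 2 < (⇑x) ω := by
        have := hnorm.1
        linarith
      linarith [h4, hcℓ]
    have hPA : P A ≤ P A / 2 := by
      have h1 : P A ≤ P (A ∩ B) + P (A \ B) := measure_le_inter_add_diff P A B
      have h2 : P (A ∩ B) ≤ P B := measure_mono inter_subset_right
      have h3 : P A ≤ κ + κ :=
        h1.trans (add_le_add (h2.trans hPB.le) (hPdiff.trans (hℓ g hgC)))
      calc P A ≤ κ + κ := h3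
        _ = P A / 2 := ENNReal.add_halves _
    exact absurd (hPA.trans_lt (ENNReal.half_lt_self hApos.ne' hAne)) (lt_irrefl _)
  obtain ⟨c, hc0, hnot⟩ := hnotin
  obtain ⟨f, u, hfu, hux⟩ :=
    geometric_hahn_banach_closed_point hDconv.closure isClosed_closure hnot
  set Y : Lp ℝ 2 P := (InnerProductSpace.toDual ℝ (Lp ℝ 2 P)).symm f with hYdef
  have hYx : ∀ x : Lp ℝ 2 P, f x = ∫ ω, (⇑Y) ω * (⇑x) ω ∂P := by
    intro x
    rw [← InnerProductSpace.toDual_symm_apply (𝕜 := ℝ) (y := f) (x := x)]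
    rw [← hYdef, L2.inner_def]
    congr 1
    ext ω
    simp [RCLike.inner_apply']
    exact mul_comm _ _
  have hu0 : 0 < u := by
    have := hfu 0 (subset_closure h0D)
    simpa using this
  have hYint : Integrable (⇑Y) P := (Lp.memLp Y).integrable one_le_two
  have hfC : ∀ g ∈ C, ∫ ω, (⇑Y) ω * g ω ∂P ≤ u := by
    intro g hg
    have hmem : ((hC2 g hg).toLp g) ∈ D := by
      refine ⟨g, hg, ?_⟩
      filter_upwards [MemLp.coeFn_toLp (hC2 g hg)] with ω h
      rw [h]
    have hlt := (hfu _ (subset_closure hmem)).le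
    rw [hYx] at hlt
    refine le_trans (le_of_eq ?_) hlt
    apply integral_congr_ae
    filter_upwards [MemLp.coeFn_toLp (hC2 g hg)] with ω h
    rw [h]
  -- value of f on indicators
  have hind : ∀ (B : Set Ω) (hB : MeasurableSet B),
      f (indicatorConstLp 2 hB (measure_ne_top P B) (1:ℝ)) = ∫ ω in B, (⇑Y) ω ∂P := by
    intro B hB
    rw [hYx, ← integral_indicator hB]
    apply integral_congr_ae
    filter_upwards [indicatorConstLp_coeFn (p := 2) (hs := hB) (hμs := measure_ne_top P B)
      (c := (1:ℝ))] with ω h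
    rw [h]
    by_cases hω : ω ∈ B <;> simp [Set.indicator_of_mem, Set.indicator_of_notMem, hω]
  have hYnn : 0 ≤ᵐ[P] ⇑Y := by
    apply ae_nonneg_of_forall_setIntegral_nonneg hYint
    intro B hB _
    by_contra hneg
    push_neg at hneg
    set v : ℝ := ∫ ω in B, (⇑Y) ω ∂P with hvdef
    set t : ℝ := (u + 1) / (-v) with htdef
    have ht0 : 0 < t := div_pos (by linarith) (by linarith)
    have hmem : ((-t) • indicatorConstLp 2 hB (measure_ne_top P B) (1:ℝ)) ∈ D := by
      refine ⟨0, hC0, ?_⟩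
      filter_upwards [Lp.coeFn_smul (-t) (indicatorConstLp 2 hB (measure_ne_top P B) (1:ℝ)),
        indicatorConstLp_coeFn (p := 2) (hs := hB) (hμs := measure_ne_top P B) (c := (1:ℝ))]
        with ω h1 h2
      rw [h1]
      simp only [Pi.smul_apply, smul_eq_mul, h2, Pi.zero_apply]
      by_cases hω : ω ∈ B
      · simp [Set.indicator_of_mem hω]; linarith
      · simp [Set.indicator_of_notMem hω]
    have hlt := hfu _ (subset_closure hmem)
    rw [_root_.map_smul, smul_eq_mul, hind B hB] at hlt
    have : -t * v = u + 1 := by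
      have hv : v ≠ 0 := by linarith
      rw [htdef, div_neg, neg_neg, div_mul_cancel₀ _ hv]
    rw [← hvdef] at hlt
    rw [show (-t) * v = -t * v from rfl] at hlt
    rw [this] at hlt
    linarith
  have hAv : 0 < ∫ ω in A, (⇑Y) ω ∂P := by
    have h1 : u < c * ∫ ω in A, (⇑Y) ω ∂P := by
      have := hux
      rw [show c • I = c • (indicatorConstLp 2 hA hAne (1:ℝ)) from rfl] at this
      rw [_root_.map_smul, smul_eq_mul] at this
      rw [hind A hA] at this
      exact this
    nlinarith
  -- construct Z
  set y' : Ω → ℝ := (Lp.aestronglyMeasurable Y).mk (⇑Y) with hy'def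
  have hy'm : Measurable y' := (Lp.aestronglyMeasurable Y).measurable_mk
  have hy'ae : ⇑Y =ᵐ[P] y' := (Lp.aestronglyMeasurable Y).ae_eq_mk
  have hmax0 : 0 < max ‖Y‖ u := lt_max_of_lt_right hu0
  set r : ℝ := (max ‖Y‖ u)⁻¹ with hrdef
  have hr0 : 0 < r := inv_pos.2 hmax0
  set Z : Ω → ℝ := fun ω => r * max (y' ω) 0 with hZdef
  have hZae : Z =ᵐ[P] fun ω => r * (⇑Y) ω := by
    filter_upwards [hy'ae, hYnn] with ω h1 h2
    simp only [Pi.zero_apply] at h2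
    show r * max (y' ω) 0 = r * (⇑Y) ω
    rw [← h1, max_eq_left h2]
  refine ⟨Z, (hy'm.max measurable_const).const_mul r, fun ω => mul_nonneg hr0.le (le_max_right _ _),
    ?_, ?_, ?_⟩
  · -- eLpNorm bound
    rw [eLpNorm_congr_ae hZae]
    have : (fun ω => r * (⇑Y) ω) = r • (⇑Y) := rfl
    rw [this, eLpNorm_const_smul]
    have h1 : ‖r‖ₑ = ENNReal.ofReal r := by
      rw [← ofReal_norm, Real.norm_eq_abs, abs_of_pos hr0]
    have h2 : eLpNorm (⇑Y) 2 P = ENNReal.ofReal ‖Y‖ := by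
      rw [Lp.norm_def, ENNReal.ofReal_toReal (Lp.eLpNorm_ne_top Y)]
    rw [h1, h2, ← ENNReal.ofReal_mul hr0.le]
    apply ENNReal.ofReal_le_one.2
    have h3 : r * ‖Y‖ ≤ r * max ‖Y‖ u := mul_le_mul_of_nonneg_left (le_max_left _ _) hr0.le
    have h4 : r * max ‖Y‖ u = 1 := by rw [hrdef]; exact inv_mul_cancel₀ hmax0.ne'
    linarith
  · intro g hg
    have : ∫ ω, Z ω * g ω ∂P = r * ∫ ω, (⇑Y) ω * g ω ∂P := by
      rw [← integral_const_mul]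
      apply integral_congr_ae
      filter_upwards [hZae] with ω h1
      rw [h1]; ring
    rw [this]
    calc r * ∫ ω, (⇑Y) ω * g ω ∂P ≤ r * u :=
          mul_le_mul_of_nonneg_left (hfC g hg) hr0.le
      _ ≤ r * max ‖Y‖ u := mul_le_mul_of_nonneg_left (le_max_right _ _) hr0.le
      _ = 1 := by rw [hrdef]; exact inv_mul_cancel₀ hmax0.ne'
  · -- positivity on A
    have hsub : A ∩ {ω | 0 < y' ω} ⊆ A ∩ {ω | 0 < Z ω} := by
      rintro ω ⟨hωA, hωy⟩
      exact ⟨hωA, mul_pos hr0 (lt_max_of_lt_left hωy)⟩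
    have hy'pos : 0 < P (A ∩ {ω | 0 < y' ω}) := by
      by_contra hz
      push_neg at hz
      have hz0 : P (A ∩ {ω | 0 < y' ω}) = 0 := le_antisymm (by simpa using hz) zero_le
      have hres : ∀ᵐ ω ∂(P.restrict A), y' ω ≤ 0 := by
        rw [ae_restrict_iff' hA, ae_iff]
        apply measure_mono_null _ hz0
        intro ω hω
        simp only [mem_setOf_eq] at hω
        push_neg at hω
        exact ⟨hω.1, hω.2⟩
      have hres2 : ∀ᵐ ω ∂(P.restrict A), 0 ≤ y' ω := ae_restrict_of_ae (by
        filter_upwards [hYnn, hy'ae] with ω h1 h2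
        rw [← h2]; exact h1)
      have hzero : ∀ᵐ ω ∂(P.restrict A), y' ω = 0 := by
        filter_upwards [hres, hres2] with ω h1 h2
        linarith
      have : ∫ ω in A, (⇑Y) ω ∂P = 0 := by
        rw [integral_congr_ae (ae_restrict_of_ae hy'ae)]
        rw [integral_congr_ae hzero]
        simp
      rw [this] at hAv
      exact lt_irrefl _ hAv
    exact lt_of_lt_of_le hy'pos (measure_mono hsub)


set_option maxHeartbeats 1000000 in
private lemma yan_density {Ω : Type*} [MeasurableSpace Ω] (P : Measure Ω)
    [IsProbabilityMeasure P]
    (C : Set (Ω → ℝ)) (hC0 : (0 : Ω → ℝ) ∈ C) (hCconv : Convex ℝ C)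
    (hC2 : ∀ g ∈ C, MemLp g 2 P) (hCnn : ∀ g ∈ C, 0 ≤ᵐ[P] g)
    (hCmeas : ∀ g ∈ C, Measurable g)
    (hbdd : ∀ ε : ℝ≥0∞, 0 < ε → ∃ ℓ : ℝ, ∀ g ∈ C, P {ω | ℓ < g ω} ≤ ε) :
    ∃ W : Ω → ℝ≥0∞, Measurable W ∧ (∀ ω, W ω ≤ 1) ∧ (∀ᵐ ω ∂P, 0 < W ω) ∧
      ∀ g ∈ C, ∫⁻ ω, W ω * ENNReal.ofReal (g ω) ∂P ≤ 1 := by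
  classical
  set 𝒵 : Set (Ω → ℝ) := {Z | Measurable Z ∧ (∀ ω, 0 ≤ Z ω) ∧ eLpNorm Z 2 P ≤ 1 ∧
    ∀ g ∈ C, ∫ ω, Z ω * g ω ∂P ≤ 1} with h𝒵
  have hsep : ∀ A : Set Ω, MeasurableSet A → 0 < P A →
      ∃ Z ∈ 𝒵, 0 < P (A ∩ {ω | 0 < Z ω}) := by
    intro A hA hpos
    obtain ⟨Z, h1, h2, h3, h4, h5⟩ := yan_sep P C hC0 hCconv hC2 hbdd hA hpos
    exact ⟨Z, ⟨h1, h2, h3, h4⟩, h5⟩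
  -- integrability of products
  have hint : ∀ Z ∈ 𝒵, ∀ g ∈ C, Integrable (fun ω => Z ω * g ω) P := by
    intro Z hZ g hg
    have hZ2 : MemLp Z 2 P :=
      ⟨hZ.1.aestronglyMeasurable, lt_of_le_of_lt hZ.2.2.1 ENNReal.one_lt_top⟩
    have := ((hC2 g hg).smul (φ := Z) hZ2 (r := 1)).integrable le_rfl
    exact this
  set s : ℝ≥0∞ := ⨆ Z : 𝒵, P {ω | 0 < (Z : Ω → ℝ) ω} with hs
  obtain ⟨Z₀, hZ₀, hZ₀pos⟩ := hsep univ MeasurableSet.univ (by simp)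
  have hs0 : 0 < s := by
    refine lt_of_lt_of_le ?_ (le_iSup (fun Z : 𝒵 => P {ω | 0 < (Z : Ω → ℝ) ω}) ⟨Z₀, hZ₀⟩)
    simpa using hZ₀pos
  have hs1 : s ≤ 1 := by
    apply iSup_le
    intro Z
    exact prob_le_one
  have hstop : s ≠ ⊤ := (lt_of_le_of_lt hs1 ENNReal.one_lt_top).ne
  have hseq : ∀ n : ℕ, ∃ Z ∈ 𝒵, s - ((n:ℝ≥0∞)+1)⁻¹ < P {ω | 0 < Z ω} := by
    intro n
    have hlt : s - ((n:ℝ≥0∞)+1)⁻¹ < s := by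
      apply ENNReal.sub_lt_self hstop hs0.ne'
      simp [ENNReal.inv_ne_zero]
    rw [hs, lt_iSup_iff] at hlt
    obtain ⟨⟨Z, hZ⟩, h⟩ := hlt
    exact ⟨Z, hZ, h⟩
  choose Z hZmem hZlt using hseq
  set U : Set Ω := ⋃ n, {ω | 0 < Z n ω} with hU
  have hUm : MeasurableSet U :=
    MeasurableSet.iUnion fun n => measurableSet_lt measurable_const (hZmem n).1
  have hUfull : P Uᶜ = 0 := by
    by_contra hne
    have hpos : 0 < P Uᶜ := pos_iff_ne_zero.2 hne
    obtain ⟨Za, hZa, hZapos⟩ := hsep Uᶜ hUm.compl hpos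
    set δ : ℝ≥0∞ := P (Uᶜ ∩ {ω | 0 < Za ω}) with hδ
    obtain ⟨n, hn⟩ := ENNReal.exists_inv_nat_lt hZapos.ne'
    set Zc : Ω → ℝ := fun ω => (2⁻¹ : ℝ) * (Z n ω + Za ω) with hZc
    have hZcmem : Zc ∈ 𝒵 := by
      refine ⟨((hZmem n).1.add hZa.1).const_mul _, ?_, ?_, ?_⟩
      · intro ω
        have := (hZmem n).2.1 ω
        have := hZa.2.1 ω
        positivity
      · have heq : Zc = (2⁻¹ : ℝ) • (Z n + Za) := rfl
        rw [heq, eLpNorm_const_smul]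
        have hadd : eLpNorm (Z n + Za) 2 P ≤ 1 + 1 :=
          le_trans (eLpNorm_add_le (hZmem n).1.aestronglyMeasurable
            hZa.1.aestronglyMeasurable one_le_two)
            (add_le_add (hZmem n).2.2.1 hZa.2.2.1)
        calc ‖(2⁻¹:ℝ)‖ₑ * eLpNorm (Z n + Za) 2 P
            ≤ ‖(2⁻¹:ℝ)‖ₑ * (1 + 1) := by gcongr
          _ = 1 := by
              rw [← ofReal_norm, Real.norm_eq_abs]
              rw [show |(2⁻¹:ℝ)| = 2⁻¹ by norm_num]
              rw [show ((1:ℝ≥0∞) + 1) = 2 by norm_num]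
              rw [ENNReal.ofReal_inv_of_pos two_pos, ENNReal.ofReal_ofNat]
              exact ENNReal.inv_mul_cancel two_ne_zero ENNReal.ofNat_ne_top
      · intro g hg
        have h1 : ∫ ω, Zc ω * g ω ∂P
            = 2⁻¹ * ((∫ ω, Z n ω * g ω ∂P) + ∫ ω, Za ω * g ω ∂P) := by
          rw [← integral_add (hint (Z n) (hZmem n) g hg) (hint Za hZa g hg),
            ← integral_const_mul]
          congr 1
          ext ω
          simp only [hZc]
          ring
        rw [h1]
        have h2 := (hZmem n).2.2.2 g hg
        have h3 := hZa.2.2.2 g hg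
        linarith
    have hsup : {ω | 0 < Z n ω} ∪ (Uᶜ ∩ {ω | 0 < Za ω}) ⊆ {ω | 0 < Zc ω} := by
      rintro ω (hω | ⟨-, hω⟩)
      · have := hZa.2.1 ω
        show 0 < (2⁻¹:ℝ) * (Z n ω + Za ω)
        have hω' : (0:ℝ) < Z n ω := hω
        positivity
      · have := (hZmem n).2.1 ω
        show 0 < (2⁻¹:ℝ) * (Z n ω + Za ω)
        have hω' : (0:ℝ) < Za ω := hω
        positivity
    have hdisj : Disjoint {ω | 0 < Z n ω} (Uᶜ ∩ {ω | 0 < Za ω}) := by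
      rw [Set.disjoint_left]
      rintro ω hω ⟨hωU, -⟩
      exact hωU (Set.mem_iUnion.2 ⟨n, hω⟩)
    have hle : P {ω | 0 < Z n ω} + δ ≤ s := by
      have hm2 : MeasurableSet (Uᶜ ∩ {ω | 0 < Za ω}) :=
        hUm.compl.inter (measurableSet_lt measurable_const hZa.1)
      calc P {ω | 0 < Z n ω} + δ = P ({ω | 0 < Z n ω} ∪ (Uᶜ ∩ {ω | 0 < Za ω})) :=
            (measure_union hdisj hm2).symm
        _ ≤ P {ω | 0 < Zc ω} := measure_mono hsup
        _ ≤ s := le_iSup (fun Z : 𝒵 => P {ω | 0 < (Z : Ω → ℝ) ω}) ⟨Zc, hZcmem⟩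
    have h2 : s - ((n:ℝ≥0∞)+1)⁻¹ + δ ≤ s := le_trans (add_le_add_left (hZlt n).le _) hle
    have h3 : s + δ ≤ s + ((n:ℝ≥0∞)+1)⁻¹ := by
      calc s + δ ≤ (s - ((n:ℝ≥0∞)+1)⁻¹ + ((n:ℝ≥0∞)+1)⁻¹) + δ := by
            gcongr
            exact le_tsub_add
        _ = (s - ((n:ℝ≥0∞)+1)⁻¹ + δ) + ((n:ℝ≥0∞)+1)⁻¹ := by ring
        _ ≤ s + ((n:ℝ≥0∞)+1)⁻¹ := by gcongr
    have h4 : δ ≤ ((n:ℝ≥0∞)+1)⁻¹ := by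
      exact (ENNReal.add_le_add_iff_left hstop).1 h3
    have h5 : ((n:ℝ≥0∞)+1)⁻¹ ≤ ((n:ℝ≥0∞))⁻¹ := by
      gcongr
      exact le_self_add
    exact absurd ((h4.trans h5).trans_lt' hn) (by simp)
  -- define W
  set W : Ω → ℝ≥0∞ := fun ω => ∑' k, (2⁻¹ : ℝ≥0∞)^(k+1) * ENNReal.ofReal (min (Z k ω) 1)
    with hW
  have hWm : Measurable W := by
    apply Measurable.ennreal_tsum
    intro k
    exact (ENNReal.measurable_ofReal.comp ((hZmem k).1.min measurable_const)).const_mul _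
  have hgeom : ∑' k : ℕ, (2⁻¹ : ℝ≥0∞)^(k+1) = 1 := by
    have h1 : ∀ k : ℕ, (2⁻¹ : ℝ≥0∞)^(k+1) = (2⁻¹:ℝ≥0∞)^k * 2⁻¹ := fun k => pow_succ _ _
    rw [tsum_congr h1, ENNReal.tsum_mul_right, ENNReal.tsum_geometric,
      ENNReal.one_sub_inv_two, inv_inv]
    exact ENNReal.mul_inv_cancel two_ne_zero ENNReal.ofNat_ne_top
  have hWle : ∀ ω, W ω ≤ 1 := by
    intro ω
    calc W ω ≤ ∑' k : ℕ, (2⁻¹ : ℝ≥0∞)^(k+1) * 1 := by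
          apply ENNReal.tsum_le_tsum
          intro k
          gcongr
          exact ENNReal.ofReal_le_one.2 (min_le_right _ _)
      _ = 1 := by simpa using hgeom
  have hWpos : ∀ᵐ ω ∂P, 0 < W ω := by
    have hae : ∀ᵐ ω ∂P, ω ∈ U := by
      rw [ae_iff]
      convert hUfull using 2
      rfl
    filter_upwards [hae] with ω hω
    obtain ⟨n, hn⟩ := Set.mem_iUnion.1 hω
    have hn' : (0:ℝ) < Z n ω := hn
    calc (0:ℝ≥0∞) < (2⁻¹ : ℝ≥0∞)^(n+1) * ENNReal.ofReal (min (Z n ω) 1) := by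
          apply ENNReal.mul_pos
          · simp
          · simp only [ne_eq, ENNReal.ofReal_eq_zero, not_le]
            exact lt_min hn' one_pos
      _ ≤ W ω := ENNReal.le_tsum n
  refine ⟨W, hWm, hWle, hWpos, ?_⟩
  intro g hg
  have hterm : ∀ k : ℕ, ∫⁻ ω, ENNReal.ofReal (min (Z k ω) 1) * ENNReal.ofReal (g ω) ∂P ≤ 1 := by
    intro k
    have hle : ∫⁻ ω, ENNReal.ofReal (min (Z k ω) 1) * ENNReal.ofReal (g ω) ∂P
        ≤ ∫⁻ ω, ENNReal.ofReal (Z k ω * g ω) ∂P := by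
      apply lintegral_mono_ae
      filter_upwards [hCnn g hg] with ω hgω
      simp only [Pi.zero_apply] at hgω
      rw [← ENNReal.ofReal_mul (le_min ((hZmem k).2.1 ω) zero_le_one)]
      apply ENNReal.ofReal_le_ofReal
      exact mul_le_mul_of_nonneg_right (min_le_left _ _) hgω
    refine hle.trans ?_
    rw [← ofReal_integral_eq_lintegral_ofReal (hint (Z k) (hZmem k) g hg)
      (by filter_upwards [hCnn g hg] with ω hgω;
          simp only [Pi.zero_apply] at hgω
          exact mul_nonneg ((hZmem k).2.1 ω) hgω)]
    calc ENNReal.ofReal (∫ ω, Z k ω * g ω ∂P) ≤ ENNReal.ofReal 1 :=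
          ENNReal.ofReal_le_ofReal ((hZmem k).2.2.2 g hg)
      _ = 1 := by norm_num
  calc ∫⁻ ω, W ω * ENNReal.ofReal (g ω) ∂P
      = ∫⁻ ω, ∑' k, (2⁻¹ : ℝ≥0∞)^(k+1) *
          (ENNReal.ofReal (min (Z k ω) 1) * ENNReal.ofReal (g ω)) ∂P := by
        congr 1
        ext ω
        rw [hW]
        simp only
        rw [← ENNReal.tsum_mul_right]
        congr 1
        ext k
        ring
    _ = ∑' k, ∫⁻ ω, (2⁻¹ : ℝ≥0∞)^(k+1) *
          (ENNReal.ofReal (min (Z k ω) 1) * ENNReal.ofReal (g ω)) ∂P := by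
        apply lintegral_tsum
        intro k
        exact (((ENNReal.measurable_ofReal.comp ((hZmem k).1.min measurable_const)).mul
          (ENNReal.measurable_ofReal.comp (hCmeas g hg))).const_mul _).aemeasurable
    _ ≤ ∑' k : ℕ, (2⁻¹ : ℝ≥0∞)^(k+1) * 1 := by
        apply ENNReal.tsum_le_tsum
        intro k
        rw [lintegral_const_mul _ (f := fun ω => ENNReal.ofReal (min (Z k ω) 1) * ENNReal.ofReal (g ω)) ((((hZmem k).1.min measurable_const).ennreal_ofReal).mul
          ((hCmeas g hg).ennreal_ofReal))]
        gcongr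
        exact hterm k
    _ = 1 := by simpa using hgeom


theorem stmt16 {Ω : Type*} [MeasurableSpace Ω] (P : Measure Ω)
    [IsProbabilityMeasure P]
    (S : Set (Ω → ℝ)) (hne : S.Nonempty)
    (hSmeas : ∀ h ∈ S, Measurable h) (hSnn : ∀ h ∈ S, 0 ≤ᵐ[P] h)
    (hSconvex : Convex ℝ S)
    (hSsolid : ∀ h ∈ S, ∀ g : Ω → ℝ, Measurable g → 0 ≤ᵐ[P] g → g ≤ᵐ[P] h → g ∈ S)
    (hSbdd : Tendsto (fun ℓ : ℝ => ⨆ h ∈ S, P {ω | ℓ < h ω}) atTop (nhds 0))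
    (hSclosed : ∀ (h : ℕ → Ω → ℝ) (g : Ω → ℝ), (∀ n, h n ∈ S) → Measurable g →
      TendstoInMeasure P h atTop g → g ∈ S) :
    ∃ Q : Measure Ω, IsProbabilityMeasure Q ∧ P ≪ Q ∧ Q ≪ P ∧
      (⨆ h ∈ S, ∫⁻ ω, ENNReal.ofReal (h ω) ∂Q) < ⊤ := by
  classical
  obtain ⟨h₀, hh₀⟩ := hne
  have h0S : (0 : Ω → ℝ) ∈ S :=
    hSsolid h₀ hh₀ 0 measurable_zero (Filter.EventuallyLE.refl _ _) (hSnn h₀ hh₀)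
  set C : Set (Ω → ℝ) := {g | g ∈ S ∧ MemLp g 2 P} with hC
  have hC0 : (0 : Ω → ℝ) ∈ C := ⟨h0S, MemLp.zero⟩
  have hCconv : Convex ℝ C := by
    rintro g₁ ⟨hg₁S, hg₁2⟩ g₂ ⟨hg₂S, hg₂2⟩ a b ha hb hab
    exact ⟨hSconvex hg₁S hg₂S ha hb hab, (hg₁2.const_smul a).add (hg₂2.const_smul b)⟩
  have hC2 : ∀ g ∈ C, MemLp g 2 P := fun g hg => hg.2
  have hCnn : ∀ g ∈ C, 0 ≤ᵐ[P] g := fun g hg => hSnn g hg.1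
  have hCmeas : ∀ g ∈ C, Measurable g := fun g hg => hSmeas g hg.1
  have hbdd' : ∀ ε : ℝ≥0∞, 0 < ε → ∃ ℓ : ℝ, ∀ g ∈ C, P {ω | ℓ < g ω} ≤ ε := by
    intro ε hε
    have hev : ∀ᶠ ℓ in atTop, (⨆ h ∈ S, P {ω | ℓ < h ω}) < ε :=
      hSbdd.eventually_lt_const hε
    obtain ⟨ℓ₀, hℓ₀⟩ := eventually_atTop.1 hev
    refine ⟨ℓ₀, fun g hg => ?_⟩
    exact le_trans (le_biSup (fun h => P {ω | ℓ₀ < h ω}) hg.1) (hℓ₀ ℓ₀ le_rfl).le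
  obtain ⟨W, hWm, hWle, hWpos, hWint⟩ := yan_density P C hC0 hCconv hC2 hCnn hCmeas hbdd'
  have key : ∀ h ∈ S, ∫⁻ ω, W ω * ENNReal.ofReal (h ω) ∂P ≤ 1 := by
    intro h hh
    have hCn : ∀ n : ℕ, (fun ω => min (h ω) (n : ℝ)) ∈ C := by
      intro n
      constructor
      · apply hSsolid h hh _ ((hSmeas h hh).min measurable_const)
        · filter_upwards [hSnn h hh] with ω hω
          simp only [Pi.zero_apply] at hω ⊢
          exact le_min hω (Nat.cast_nonneg n)
        · filter_upwards [] with ω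
          exact min_le_left _ _
      · refine MemLp.of_bound ((hSmeas h hh).min measurable_const).aestronglyMeasurable
          (n : ℝ) ?_
        filter_upwards [hSnn h hh] with ω hω
        simp only [Pi.zero_apply] at hω
        rw [Real.norm_eq_abs, abs_le]
        exact ⟨le_trans (neg_nonpos.mpr (Nat.cast_nonneg n))
          (le_min hω (Nat.cast_nonneg n)), min_le_right _ _⟩
    have hpt : ∀ ω, W ω * ENNReal.ofReal (h ω)
        = ⨆ n : ℕ, W ω * ENNReal.ofReal (min (h ω) (n : ℝ)) := by
      intro ω
      rw [← ENNReal.mul_iSup]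
      congr 1
      apply le_antisymm
      · refine le_iSup_of_le ⌈h ω⌉₊ ?_
        rw [min_eq_left (Nat.le_ceil (h ω))]
      · exact iSup_le fun n => ENNReal.ofReal_le_ofReal (min_le_left _ _)
    calc ∫⁻ ω, W ω * ENNReal.ofReal (h ω) ∂P
        = ∫⁻ ω, ⨆ n : ℕ, W ω * ENNReal.ofReal (min (h ω) (n : ℝ)) ∂P := by
          congr 1
          ext ω
          exact hpt ω
      _ = ⨆ n : ℕ, ∫⁻ ω, W ω * ENNReal.ofReal (min (h ω) (n : ℝ)) ∂P := by
          apply lintegral_iSup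
          · intro n
            exact hWm.mul ((hSmeas h hh).min measurable_const).ennreal_ofReal
          · intro m n hmn ω
            exact mul_le_mul_right
              (ENNReal.ofReal_le_ofReal (min_le_min le_rfl (Nat.cast_le.2 hmn))) _
      _ ≤ 1 := iSup_le fun n => hWint _ (hCn n)
  set E : ℝ≥0∞ := ∫⁻ ω, W ω ∂P with hE
  have hE1 : E ≤ 1 := by
    calc E ≤ ∫⁻ _, 1 ∂P := lintegral_mono fun ω => hWle ω
      _ = 1 := by simp
  have hEtop : E ≠ ⊤ := (lt_of_le_of_lt hE1 ENNReal.one_lt_top).ne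
  have hE0 : 0 < E := by
    by_contra hc
    push_neg at hc
    have h0 : E = 0 := le_antisymm (by simpa using hc) zero_le
    rw [hE, lintegral_eq_zero_iff hWm] at h0
    obtain ⟨ω, hω1, hω2⟩ := (hWpos.and h0).exists
    simp only [Pi.zero_apply] at hω2
    rw [hω2] at hω1
    exact lt_irrefl _ hω1
  set Q : Measure Ω := P.withDensity (fun ω => E⁻¹ * W ω) with hQ
  have hdm : Measurable (fun ω => E⁻¹ * W ω) := hWm.const_mul _
  have hQuniv : Q univ = 1 := by
    rw [hQ, withDensity_apply _ MeasurableSet.univ, Measure.restrict_univ,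
      lintegral_const_mul _ hWm, ← hE, ENNReal.inv_mul_cancel hE0.ne' hEtop]
  refine ⟨Q, ⟨hQuniv⟩, ?_, ?_, ?_⟩
  · rw [hQ]
    apply withDensity_absolutelyContinuous' hdm.aemeasurable
    filter_upwards [hWpos] with ω hω
    exact mul_ne_zero (ENNReal.inv_ne_zero.2 hEtop) hω.ne'
  · rw [hQ]
    exact withDensity_absolutelyContinuous P _
  · have hbound : ∀ h ∈ S, ∫⁻ ω, ENNReal.ofReal (h ω) ∂Q ≤ E⁻¹ := by
      intro h hh
      rw [hQ, lintegral_withDensity_eq_lintegral_mul P hdm (hSmeas h hh).ennreal_ofReal]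
      calc ∫⁻ ω, ((fun ω => E⁻¹ * W ω) * fun ω => ENNReal.ofReal (h ω)) ω ∂P
          = E⁻¹ * ∫⁻ ω, W ω * ENNReal.ofReal (h ω) ∂P := by
            rw [← lintegral_const_mul _ (f := fun ω => W ω * ENNReal.ofReal (h ω)) (hWm.mul (hSmeas h hh).ennreal_ofReal)]
            congr 1
            ext ω
            simp [mul_assoc]
        _ ≤ E⁻¹ * 1 := mul_le_mul_right (key h hh) _
        _ = E⁻¹ := mul_one _
    calc (⨆ h ∈ S, ∫⁻ ω, ENNReal.ofReal (h ω) ∂Q) ≤ E⁻¹ := iSup₂_le hbound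
      _ < ⊤ := ENNReal.inv_lt_top.2 hE0
end
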